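/- arXiv:1707.05762 — 6 statements merged into one kernel-verified Lean document; each statement's English description precedes it below -/
import Mathlib

section
/- Let T be the shift map on [0,1]^ℤ and let d_T(x,y)=∑_{k∈ℤ} 2^{−|k|} |x_k − y_k|. Then the upper metric mean dimension satisfies mdim([0,1]^ℤ, d_T, T) = 1. -/
open Filter Set Metric Function
open scoped ENNReal NNReal

noncomputable section

universe u

/-- A pair `(X̂, Y)` of random variables on a probability space `(Ω, P)` satisfying
condition `(*)_{n,ε,μ}`: `X̂` has law `μ` and the expected average distortion
`E[(1/n) ∑_{k<n} d(T^k X̂, Y_k)]` is at most `ε`. -/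
structure DistortionPair {X : Type u} [MetricSpace X] [MeasurableSpace X]
    (T : X → X) (μ : MeasureTheory.Measure X) (ε : ℝ) (n : ℕ) where
  Ω : Type u
  [mΩ : MeasurableSpace Ω]
  P : MeasureTheory.Measure Ω
  probP : MeasureTheory.IsProbabilityMeasure P
  Xh : Ω → X
  Y : Ω → Fin n → X
  measXh : Measurable Xh
  measY : Measurable Y
  law : MeasureTheory.Measure.map Xh P = μ
  distortion : ∫ ω, (∑ k : Fin n, dist (T^[(k : ℕ)] (Xh ω)) (Y ω k)) / n ∂P ≤ ε

open MeasureTheory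

section Defs

variable {X : Type u} [MetricSpace X]

/-- The Bowen dynamical distance `d_n(x,y) = max_{0 ≤ k ≤ n-1} d(T^k x, T^k y)`. -/
def dynDist (T : X → X) (n : ℕ) (x y : X) : ℝ :=
  (((Finset.range n).sup (fun k => nndist (T^[k] x) (T^[k] y)) : ℝ≥0) : ℝ)

/-- The `(n,ε)`-dynamical ball around `x`. -/
def dynBall (T : X → X) (n : ℕ) (x : X) (ε : ℝ) : Set X :=
  {y | dynDist T n x y < ε}

/-- `N_d(n,ε)`: the maximal cardinality of an `(n,ε)`-separated subset of `X`. -/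
def dynSepNum (T : X → X) (n : ℕ) (ε : ℝ) : ℕ :=
  sSup {m | ∃ E : Finset X, (∀ x ∈ E, ∀ y ∈ E, x ≠ y → ε < dynDist T n x y) ∧ E.card = m}

/-- `S(X,d,ε) = limsup_n (1/n) log N_d(n,ε)`. -/
def dynS (T : X → X) (ε : ℝ) : ℝ≥0∞ :=
  Filter.atTop.limsup fun n : ℕ =>
    ENNReal.ofReal (Real.log (dynSepNum T n ε)) / (n : ℝ≥0∞)

/-- The upper metric mean dimension `mdim(X,d,T) = limsup_{ε → 0⁺} S(X,d,ε)/|log ε|`. -/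
def mdim (T : X → X) : ℝ≥0∞ :=
  Filter.limsup (fun ε : ℝ => dynS T ε / ENNReal.ofReal |Real.log ε|)
    (nhdsWithin 0 (Set.Ioi 0))

/-- The topological entropy `h_top(X,T) = lim_{ε → 0⁺} S(X,d,ε)`
(the limit exists by monotonicity, hence equals the `limsup`). -/
def htop (T : X → X) : ℝ≥0∞ :=
  Filter.limsup (fun ε : ℝ => dynS T ε) (nhdsWithin 0 (Set.Ioi 0))

/-- `N_μ(n,ε,δ)`: the minimal number of `(n,ε)`-dynamical balls needed to cover a set of
`μ`-measure strictly bigger than `1 - δ`. -/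
def dynCovNum [MeasurableSpace X] (T : X → X) (μ : Measure X) (n : ℕ) (ε δ : ℝ) : ℕ :=
  sInf {m | ∃ F : Finset X, F.card = m ∧
    ENNReal.ofReal (1 - δ) < μ (⋃ x ∈ F, dynBall T n x ε)}

/-- `h_μ(ε,T,δ) = limsup_n (1/n) log N_μ(n,ε,δ)`. -/
def dynH [MeasurableSpace X] (T : X → X) (μ : Measure X) (ε δ : ℝ) : ℝ≥0∞ :=
  Filter.atTop.limsup fun n : ℕ =>
    ENNReal.ofReal (Real.log (dynCovNum T μ n ε δ)) / (n : ℝ≥0∞)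

/-- The average dynamical distance `d̃_n(x,y) = (1/n) ∑_{k<n} d(T^k x, T^k y)`. -/
def avgDist (T : X → X) (n : ℕ) (x y : X) : ℝ :=
  (∑ k ∈ Finset.range n, dist (T^[k] x) (T^[k] y)) / n

/-- The `(n,ε)`-average dynamical ball around `x`. -/
def avgBall (T : X → X) (n : ℕ) (x : X) (ε : ℝ) : Set X :=
  {y | avgDist T n x y < ε}

/-- `Ñ_d(n,ε)`: the maximal cardinality of an `(n,ε)`-average separated subset of `X`. -/
def avgSepNum (T : X → X) (n : ℕ) (ε : ℝ) : ℕ :=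
  sSup {m | ∃ E : Finset X, (∀ x ∈ E, ∀ y ∈ E, x ≠ y → ε < avgDist T n x y) ∧ E.card = m}

/-- `S̃(X,d,ε) = limsup_n (1/n) log Ñ_d(n,ε)`. -/
def avgS (T : X → X) (ε : ℝ) : ℝ≥0∞ :=
  Filter.atTop.limsup fun n : ℕ =>
    ENNReal.ofReal (Real.log (avgSepNum T n ε)) / (n : ℝ≥0∞)

/-- `Ñ_μ(n,ε,δ)`: the minimal number of `(n,ε)`-average dynamical balls needed to cover a set
of `μ`-measure strictly bigger than `1 - δ`. -/
def avgCovNum [MeasurableSpace X] (T : X → X) (μ : Measure X) (n : ℕ) (ε δ : ℝ) : ℕ :=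
  sInf {m | ∃ F : Finset X, F.card = m ∧
    ENNReal.ofReal (1 - δ) < μ (⋃ x ∈ F, avgBall T n x ε)}

/-- `h̃_μ(ε,T,δ) = limsup_n (1/n) log Ñ_μ(n,ε,δ)`. -/
def avgH [MeasurableSpace X] (T : X → X) (μ : Measure X) (ε δ : ℝ) : ℝ≥0∞ :=
  Filter.atTop.limsup fun n : ℕ =>
    ENNReal.ofReal (Real.log (avgCovNum T μ n ε δ)) / (n : ℝ≥0∞)

/-- `h̃_μ(T,δ) = lim_{ε → 0⁺} h̃_μ(ε,T,δ)` (the limit exists by monotonicity, hence equals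
the `limsup`). -/
def avgHlim [MeasurableSpace X] (T : X → X) (μ : Measure X) (δ : ℝ) : ℝ≥0∞ :=
  Filter.limsup (fun ε : ℝ => avgH T μ ε δ) (nhdsWithin 0 (Set.Ioi 0))

end Defs

/-- `N(ε)`: the maximal cardinality of an `ε`-separated subset of `Y`. -/
def sepNum (Y : Type*) [MetricSpace Y] (ε : ℝ) : ℕ :=
  sSup {m | ∃ E : Finset Y, (∀ x ∈ E, ∀ y ∈ E, x ≠ y → ε < dist x y) ∧ E.card = m}

/-- The upper box (Minkowski) dimension `limsup_{ε → 0⁺} log N(ε) / |log ε|`. -/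
def upperBoxDim (Y : Type*) [MetricSpace Y] : ℝ≥0∞ :=
  Filter.limsup
    (fun ε : ℝ => ENNReal.ofReal (Real.log (sepNum Y ε)) / ENNReal.ofReal |Real.log ε|)
    (nhdsWithin 0 (Set.Ioi 0))

section Entropy

variable {X : Type u} [MeasurableSpace X]

/-- The entropy contribution `-μ(A) log μ(A)` of one cell (nonnegative when `μ(A) ≤ 1`). -/
def cellEnt (μ : Measure X) (A : Set X) : ℝ≥0∞ :=
  ENNReal.ofReal (-((μ A).toReal * Real.log (μ A).toReal))

/-- `H_μ(P ∨ T⁻¹P ∨ ⋯ ∨ T^{-(n-1)}P)` for the finite partition `P` indexed by `Fin m`. -/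
def refinedEnt (μ : Measure X) (T : X → X) {m : ℕ} (P : Fin m → Set X) (n : ℕ) : ℝ≥0∞ :=
  ∑ s : Fin n → Fin m, cellEnt μ (⋂ k : Fin n, T^[(k : ℕ)] ⁻¹' P (s k))

/-- `h_μ(P,T) = inf_{n ≥ 1} (1/n) H_μ(Pⁿ)`. -/
def entPart (μ : Measure X) (T : X → X) {m : ℕ} (P : Fin m → Set X) : ℝ≥0∞ :=
  ⨅ n : ℕ, refinedEnt μ T P (n + 1) / ((n + 1 : ℕ) : ℝ≥0∞)

/-- The measure-theoretic (Kolmogorov–Sinai) entropy `h_μ(T) = sup_P h_μ(P,T)`, the supremum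
over all finite measurable partitions of `X`. -/
def KSentropy (μ : Measure X) (T : X → X) : ℝ≥0∞ :=
  ⨆ (m : ℕ) (P : Fin m → Set X) (_ : ∀ i, MeasurableSet (P i))
    (_ : Pairwise (Function.onFun Disjoint P)) (_ : (⋃ i, P i) = Set.univ),
    entPart μ T P

end Entropy

section RD

open scoped Classical in
/-- The Kullback–Leibler divergence `∫ log (dp/dq) dp` (with value `∞` if `p` is not
absolutely continuous w.r.t. `q` or the integrand is not integrable). -/
def klDiv {α : Type*} [MeasurableSpace α] (p q : Measure α) : ℝ≥0∞ :=
  if p ≪ q ∧ Integrable (fun x => Real.log (p.rnDeriv q x).toReal) p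
  then ENNReal.ofReal (∫ x, Real.log (p.rnDeriv q x).toReal ∂p)
  else ⊤

/-- The mutual information `I(U,V)`: the Kullback–Leibler divergence of the joint law of
`(U,V)` with respect to the product of the laws of `U` and `V`. -/
def mutualInfo {Ω α β : Type*} [MeasurableSpace Ω] [MeasurableSpace α] [MeasurableSpace β]
    (P : Measure Ω) (U : Ω → α) (V : Ω → β) : ℝ≥0∞ :=
  klDiv (Measure.map (fun ω => (U ω, V ω)) P)
    ((Measure.map U P).prod (Measure.map V P))

/-- The rate distortion function `R_μ(ε) = inf (1/n) I(X̂,Y)`, the infimum over all `n ≥ 1`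
and all pairs `(X̂,Y)` satisfying condition `(*)_{n,ε,μ}`. -/
def rateDistortion {X : Type u} [MetricSpace X] [MeasurableSpace X]
    (T : X → X) (μ : Measure X) (ε : ℝ) : ℝ≥0∞ :=
  ⨅ (n : ℕ) (_ : 0 < n) (pair : DistortionPair T μ ε n),
    @mutualInfo pair.Ω X (Fin n → X) pair.mΩ _ _ pair.P pair.Xh pair.Y / (n : ℝ≥0∞)

end RD

end

noncomputable section
namespace MdimAux

abbrev I01 := Set.Icc (0:ℝ) 1
abbrev XX := ℤ → I01

def Tsh : XX → XX := fun x => fun k => x (k + 1)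

lemma Tsh_iterate (j : ℕ) (x : XX) (k : ℤ) : (Tsh^[j] x) k = x (k + j) := by
  induction j generalizing x k with
  | zero => simp
  | succ n ih =>
    rw [Function.iterate_succ_apply, ih]
    show x (k + n + 1) = _
    congr 1; push_cast; ring

lemma dist_I01_le_one (a b : I01) : dist a b ≤ 1 := by
  rw [Subtype.dist_eq, Real.dist_eq, abs_sub_le_iff]
  constructor <;> linarith [a.2.1, a.2.2, b.2.1, b.2.2]

lemma two_zpow_neg_natCast (n : ℕ) : (2:ℝ)^(-(n:ℤ)) = (1/2)^n := by
  rw [zpow_neg, zpow_natCast, one_div, inv_pow]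

lemma natGeom (t : Finset ℕ) (m : ℕ) (ht : ∀ n ∈ t, m ≤ n) :
    ∑ n ∈ t, ((2:ℝ))^(-(n:ℤ)) ≤ 2 * 2^(-(m:ℤ)) := by
  simp only [two_zpow_neg_natCast]
  have hsub : t ⊆ Finset.Ico m ((t.sup id) + 1) := by
    intro n hn
    simp only [Finset.mem_Ico]
    exact ⟨ht n hn, Nat.lt_succ_of_le (Finset.le_sup (f := id) hn)⟩
  have h1 : ∑ n ∈ t, ((1:ℝ)/2)^n ≤ ∑ n ∈ Finset.Ico m (t.sup id + 1), ((1:ℝ)/2)^n :=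
    Finset.sum_le_sum_of_subset_of_nonneg hsub (by intro i _ _; positivity)
  refine h1.trans ?_
  rw [Finset.sum_Ico_eq_sum_range]
  have : ∑ i ∈ Finset.range (t.sup id + 1 - m), ((1:ℝ)/2)^(m + i)
      = (1/2)^m * ∑ i ∈ Finset.range (t.sup id + 1 - m), ((1:ℝ)/2)^i := by
    rw [Finset.mul_sum]; exact Finset.sum_congr rfl (fun i _ => by rw [pow_add])
  rw [this]
  have h0 : (0:ℝ) ≤ (1/2)^m := by positivity
  nlinarith [sum_geometric_two_le (t.sup id + 1 - m)]

lemma intGeom (s : Finset ℤ) (m : ℕ) (hs : ∀ k ∈ s, (m:ℤ) ≤ |k|) :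
    ∑ k ∈ s, ((2:ℝ))^(-|k|) ≤ 4 * 2^(-(m:ℤ)) := by
  classical
  set s₁ := s.filter (fun k => 0 ≤ k) with hs₁
  set s₂ := s.filter (fun k => ¬ (0 ≤ k)) with hs₂
  have hsplit : ∑ k ∈ s, ((2:ℝ))^(-|k|)
      = ∑ k ∈ s₁, ((2:ℝ))^(-|k|) + ∑ k ∈ s₂, ((2:ℝ))^(-|k|) :=
    (Finset.sum_filter_add_sum_filter_not s _ _).symm
  have key : ∀ (u : Finset ℤ) (φ : ℤ → ℕ), (∀ k ∈ u, (φ k : ℤ) = |k|) →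
      (∀ a ∈ u, ∀ b ∈ u, φ a = φ b → a = b) → (∀ k ∈ u, (m:ℤ) ≤ |k|) →
      ∑ k ∈ u, ((2:ℝ))^(-|k|) ≤ 2 * 2^(-(m:ℤ)) := by
    intro u φ hφ hinj hm'
    have : ∑ k ∈ u, ((2:ℝ))^(-|k|) = ∑ n ∈ u.image φ, ((2:ℝ))^(-(n:ℤ)) := by
      rw [Finset.sum_image hinj]
      exact Finset.sum_congr rfl (fun k hk => by rw [hφ k hk])
    rw [this]
    apply natGeom
    intro n hn
    simp only [Finset.mem_image] at hn
    obtain ⟨k, hk, rfl⟩ := hn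
    have := hm' k hk; have := hφ k hk; omega
  have h₁ := key s₁ Int.toNat
    (fun k hk => by have h := (Finset.mem_filter.1 hk).2
                    rw [abs_of_nonneg h]; omega)
    (fun a ha b hb h => by
      have := (Finset.mem_filter.1 ha).2; have := (Finset.mem_filter.1 hb).2; omega)
    (fun k hk => hs k (Finset.mem_filter.1 hk).1)
  have h₂ := key s₂ (fun k => (-k).toNat)
    (fun k hk => by have h := (Finset.mem_filter.1 hk).2
                    rw [abs_of_neg (by omega)]
                    show ((-k).toNat : ℤ) = -k; omega)
    (fun a ha b hb h => by
      have := (Finset.mem_filter.1 ha).2; have := (Finset.mem_filter.1 hb).2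
      have h' : (-a).toNat = (-b).toNat := h; omega)
    (fun k hk => hs k (Finset.mem_filter.1 hk).1)
  rw [hsplit]; linarith

lemma summable_w : Summable (fun k : ℤ => (2:ℝ)^(-|k|)) := by
  apply Summable.of_nat_of_neg
  · have : (fun n : ℕ => (2:ℝ)^(-|(n:ℤ)|)) = fun n : ℕ => (1/2:ℝ)^n := by
      funext n
      rw [abs_of_nonneg (by positivity), zpow_neg, zpow_natCast, one_div, inv_pow]
    rw [this]
    exact summable_geometric_of_lt_one (by norm_num) (by norm_num)
  · have : (fun n : ℕ => (2:ℝ)^(-|(-n:ℤ)|)) = fun n : ℕ => (1/2:ℝ)^n := by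
      funext n
      rw [abs_neg, abs_of_nonneg (by positivity), zpow_neg, zpow_natCast, one_div, inv_pow]
    rw [this]
    exact summable_geometric_of_lt_one (by norm_num) (by norm_num)

lemma floor_close {a b η : ℝ} (hη : 0 < η) (ha : 0 ≤ a) (hb : 0 ≤ b)
    (h : ⌊a/η⌋₊ = ⌊b/η⌋₊) : dist a b ≤ η := by
  have fa := Nat.floor_le (div_nonneg ha hη.le)
  have fb := Nat.floor_le (div_nonneg hb hη.le)
  have ga := Nat.lt_floor_add_one (a/η)
  have gb := Nat.lt_floor_add_one (b/η)
  rw [h] at fa ga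
  rw [Real.dist_eq, abs_sub_le_iff]
  constructor
  · have : a/η - b/η ≤ 1 := by linarith
    calc a - b = (a/η - b/η) * η := by field_simp
      _ ≤ 1 * η := by nlinarith
      _ = η := one_mul η
  · have : b/η - a/η ≤ 1 := by linarith
    calc b - a = (b/η - a/η) * η := by field_simp
      _ ≤ 1 * η := by nlinarith
      _ = η := one_mul η

section WithMetric
set_option linter.unusedSectionVars false

variable [MetricSpace XX]
variable (hm : ∀ x y : XX, dist x y = ∑' k : ℤ, (2:ℝ) ^ (-|k|) * dist (x k) (y k))
include hm

lemma summable_term (x y : XX) :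
    Summable (fun k : ℤ => (2:ℝ)^(-|k|) * dist (x k) (y k)) := by
  apply Summable.of_nonneg_of_le (fun k => by positivity) _ summable_w
  intro k
  have h1 := dist_I01_le_one (x k) (y k)
  have h2 : (0:ℝ) < 2^(-|k|) := by positivity
  nlinarith

lemma coord_le_dist (x y : XX) (j : ℤ) :
    (2:ℝ)^(-|j|) * dist (x j) (y j) ≤ dist x y := by
  rw [hm]
  exact Summable.le_tsum (summable_term hm x y) j (fun i _ => by positivity)

lemma coord0_le_dist (x y : XX) : dist (x 0) (y 0) ≤ dist x y := by
  have := coord_le_dist hm x y 0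
  simpa using this

lemma dist_le_of_close (x y : XX) (η : ℝ) (K : ℕ) (hη : 0 ≤ η)
    (h : ∀ k : ℤ, |k| ≤ (K:ℤ) → dist (x k) (y k) ≤ η) :
    dist x y ≤ 4*η + 4*2^(-(K:ℤ)) := by
  classical
  rw [hm]
  apply Summable.tsum_le_of_sum_le (summable_term hm x y)
  intro s
  set s₁ := s.filter (fun k => |k| ≤ (K:ℤ))
  set s₂ := s.filter (fun k => ¬ (|k| ≤ (K:ℤ)))
  have hsplit := (Finset.sum_filter_add_sum_filter_not s (fun k => |k| ≤ (K:ℤ))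
    (fun k => (2:ℝ)^(-|k|) * dist (x k) (y k))).symm
  have h₁ : ∑ k ∈ s₁, (2:ℝ)^(-|k|) * dist (x k) (y k) ≤ 4*η := by
    calc ∑ k ∈ s₁, (2:ℝ)^(-|k|) * dist (x k) (y k)
        ≤ ∑ k ∈ s₁, (2:ℝ)^(-|k|) * η := by
          apply Finset.sum_le_sum
          intro k hk
          have hk' := (Finset.mem_filter.1 hk).2
          have : (0:ℝ) < 2^(-|k|) := by positivity
          nlinarith [h k hk']
      _ = (∑ k ∈ s₁, (2:ℝ)^(-|k|)) * η := by rw [Finset.sum_mul]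
      _ ≤ (4 * 2^(-(0:ℕ):ℤ)) * η := by
          apply mul_le_mul_of_nonneg_right _ hη
          exact intGeom s₁ 0 (fun k _ => by positivity)
      _ = 4*η := by norm_num
  have h₂ : ∑ k ∈ s₂, (2:ℝ)^(-|k|) * dist (x k) (y k) ≤ 4*2^(-(K:ℤ)) := by
    calc ∑ k ∈ s₂, (2:ℝ)^(-|k|) * dist (x k) (y k)
        ≤ ∑ k ∈ s₂, (2:ℝ)^(-|k|) := by
          apply Finset.sum_le_sum
          intro k _
          have h1 := dist_I01_le_one (x k) (y k)
          have : (0:ℝ) < 2^(-|k|) := by positivity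
          nlinarith
      _ ≤ 4*2^(-(K:ℤ)) := intGeom s₂ K (fun k hk => by
          have := (Finset.mem_filter.1 hk).2; omega)
  linarith

lemma le_dynDist {n j : ℕ} (hj : j < n) (x y : XX) :
    dist (x (j:ℤ)) (y (j:ℤ)) ≤ dynDist Tsh n x y := by
  have h1 : dist (x (j:ℤ)) (y (j:ℤ)) ≤ dist (Tsh^[j] x) (Tsh^[j] y) := by
    have := coord0_le_dist hm (Tsh^[j] x) (Tsh^[j] y)
    rwa [Tsh_iterate, Tsh_iterate, zero_add] at this
  refine h1.trans ?_
  have h2 : nndist (Tsh^[j] x) (Tsh^[j] y)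
      ≤ (Finset.range n).sup (fun k => nndist (Tsh^[k] x) (Tsh^[k] y)) :=
    Finset.le_sup (f := fun k => nndist (Tsh^[k] x) (Tsh^[k] y)) (Finset.mem_range.2 hj)
  calc dist (Tsh^[j] x) (Tsh^[j] y) = ((nndist (Tsh^[j] x) (Tsh^[j] y) : ℝ≥0) : ℝ) :=
        (coe_nndist _ _).symm
    _ ≤ dynDist Tsh n x y := NNReal.coe_le_coe.2 h2

lemma dynDist_le {n : ℕ} (x y : XX) {c : ℝ} (hc : 0 ≤ c)
    (h : ∀ j < n, dist (Tsh^[j] x) (Tsh^[j] y) ≤ c) : dynDist Tsh n x y ≤ c := by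
  unfold dynDist
  rw [show c = ((c.toNNReal : ℝ≥0):ℝ) from (Real.coe_toNNReal c hc).symm]
  apply NNReal.coe_le_coe.2
  apply Finset.sup_le
  intro k hk
  rw [← NNReal.coe_le_coe, coe_nndist, Real.coe_toNNReal _ hc]
  exact h k (Finset.mem_range.1 hk)

lemma sep_card_le (ε η : ℝ) (K n : ℕ) (hη : 0 < η)
    (hεK : 4*η + 4*2^(-(K:ℤ)) ≤ ε)
    (E : Finset XX) (hE : ∀ x ∈ E, ∀ y ∈ E, x ≠ y → ε < dynDist Tsh n x y) :
    E.card ≤ (⌊1/η⌋₊ + 1) ^ (n + 2*K + 1) := by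
  classical
  set s : Finset ℤ := Finset.Icc (-(K:ℤ)) ((n:ℤ)+K) with hs
  set B : ℕ := ⌊1/η⌋₊ + 1 with hB
  have hφbound : ∀ (x : XX) (k : ℤ), ⌊((x k : ℝ))/η⌋₊ < B := by
    intro x k
    have h1 : ((x k : ℝ))/η ≤ 1/η := by
      gcongr
      exact (x k).2.2
    calc ⌊((x k : ℝ))/η⌋₊ ≤ ⌊1/η⌋₊ := Nat.floor_le_floor h1
      _ < B := Nat.lt_succ_self _
  set φ : XX → (↥s → Fin B) := fun x k => ⟨⌊((x k.1 : ℝ))/η⌋₊, hφbound x k.1⟩ with hφ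
  have hinj : Set.InjOn φ E := by
    intro x hx y hy hxy
    by_contra hne
    have hsep := hE x hx y hy hne
    have hle : dynDist Tsh n x y ≤ ε := by
      apply dynDist_le hm x y (lt_of_lt_of_le (by positivity) hεK).le
      intro j hj
      have hclose : ∀ k : ℤ, |k| ≤ (K:ℤ) → dist ((Tsh^[j] x) k) ((Tsh^[j] y) k) ≤ η := by
        intro k hk
        rw [Tsh_iterate, Tsh_iterate]
        have hmem : (k + j) ∈ s := by
          rw [hs, Finset.mem_Icc]
          have h' := abs_le.1 hk
          omega
        have := congrFun hxy ⟨k + j, hmem⟩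
        rw [hφ] at this
        simp only [Fin.mk.injEq] at this
        rw [Subtype.dist_eq]
        exact floor_close hη (x (k+j)).2.1 (y (k+j)).2.1 this
      calc dist (Tsh^[j] x) (Tsh^[j] y) ≤ 4*η + 4*2^(-(K:ℤ)) :=
            dist_le_of_close hm _ _ η K hη.le hclose
        _ ≤ ε := hεK
    exact absurd hle (not_le.2 hsep)
  have hcard : E.card ≤ Fintype.card (↥s → Fin B) := by
    have := Finset.card_le_card_of_injOn φ (fun a _ => Finset.mem_univ (φ a)) hinj
    simpa using this
  rw [Fintype.card_fun, Fintype.card_fin, Fintype.card_coe] at hcard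
  have hscard : s.card = n + 2*K + 1 := by
    rw [hs, Int.card_Icc]
    omega
  rwa [hscard] at hcard

def sepSet (n : ℕ) (ε : ℝ) : Set ℕ :=
  {m | ∃ E : Finset XX, (∀ x ∈ E, ∀ y ∈ E, x ≠ y → ε < dynDist Tsh n x y) ∧ E.card = m}

lemma dynSepNum_eq_sSup (n : ℕ) (ε : ℝ) : dynSepNum Tsh n ε = sSup (sepSet n ε) := rfl

lemma sepSet_nonempty (n : ℕ) (ε : ℝ) : (sepSet n ε).Nonempty :=
  ⟨0, ∅, by simp, rfl⟩

lemma sepSet_bddAbove {ε η : ℝ} {K : ℕ} (n : ℕ) (hη : 0 < η)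
    (hεK : 4*η + 4*2^(-(K:ℤ)) ≤ ε) : BddAbove (sepSet n ε) := by
  refine ⟨(⌊1/η⌋₊ + 1) ^ (n + 2*K + 1), ?_⟩
  rintro m' ⟨E, hE, rfl⟩
  exact sep_card_le hm ε η K n hη hεK E hE

lemma dynSepNum_le {ε η : ℝ} {K : ℕ} (n : ℕ) (hη : 0 < η)
    (hεK : 4*η + 4*2^(-(K:ℤ)) ≤ ε) :
    dynSepNum Tsh n ε ≤ (⌊1/η⌋₊ + 1) ^ (n + 2*K + 1) := by
  rw [dynSepNum_eq_sSup hm]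
  apply csSup_le (sepSet_nonempty hm n ε)
  rintro m' ⟨E, hE, rfl⟩
  exact sep_card_le hm ε η K n hη hεK E hE

lemma dynSepNum_ge {ε η : ℝ} {K : ℕ} (n : ℕ) (hε : 0 < ε) (hη : 0 < η)
    (hεK : 4*η + 4*2^(-(K:ℤ)) ≤ ε) :
    (⌊1/(2*ε)⌋₊ + 1) ^ n ≤ dynSepNum Tsh n ε := by
  classical
  set M : ℕ := ⌊1/(2*ε)⌋₊ + 1 with hM
  have hgrid : ∀ i : Fin M, (i:ℝ) * (2*ε) ∈ I01 := by
    intro i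
    constructor
    · positivity
    · have h1 : (i:ℕ) ≤ ⌊1/(2*ε)⌋₊ := Nat.lt_succ_iff.1 i.2
      have h1' : ((i:ℕ):ℝ) ≤ (⌊1/(2*ε)⌋₊:ℝ) := by exact_mod_cast h1
      have h2 : (⌊1/(2*ε)⌋₊ : ℝ) ≤ 1/(2*ε) := Nat.floor_le (by positivity)
      calc (i:ℝ) * (2*ε) ≤ (1/(2*ε)) * (2*ε) := by nlinarith
        _ = 1 := by field_simp
  set ψ : (Fin n → Fin M) → XX := fun v k =>
    if h : 0 ≤ k ∧ k < n then ⟨(v ⟨k.toNat, by omega⟩ : ℝ) * (2*ε), hgrid _⟩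
    else ⟨0, by norm_num⟩ with hψ
  have hcoord : ∀ (v : Fin n → Fin M) (j : Fin n), ψ v (j:ℤ) = ⟨(v j : ℝ) * (2*ε), hgrid _⟩ := by
    intro v j
    rw [hψ]
    have h : (0:ℤ) ≤ (j:ℤ) ∧ (j:ℤ) < n := ⟨Int.ofNat_nonneg _, by exact_mod_cast j.2⟩
    simp only [dif_pos h, Int.toNat_natCast, Fin.eta]
  have hsepc : ∀ v w : Fin n → Fin M, ∀ j : Fin n, v j ≠ w j →
      2*ε ≤ dist (ψ v (j:ℤ)) (ψ w (j:ℤ)) := by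
    intro v w j hne
    rw [hcoord, hcoord, Subtype.dist_eq, Real.dist_eq]
    have hne' : (v j : ℕ) ≠ (w j : ℕ) := fun h => hne (Fin.ext h)
    have hZ : (1:ℤ) ≤ |((v j:ℕ):ℤ) - ((w j:ℕ):ℤ)| := by
      rcases abs_cases (((v j:ℕ):ℤ) - ((w j:ℕ):ℤ)) with ⟨h,_⟩|⟨h,_⟩ <;> omega
    have h1 : (1:ℝ) ≤ ((|((v j:ℕ):ℤ) - ((w j:ℕ):ℤ)| : ℤ) : ℝ) := by exact_mod_cast hZ
    rw [Int.cast_abs] at h1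
    push_cast at h1
    calc 2*ε = 1 * (2*ε) := (one_mul _).symm
      _ ≤ |(v j : ℝ) - (w j : ℝ)| * (2*ε) := by nlinarith
      _ = |(v j : ℝ) * (2*ε) - (w j : ℝ) * (2*ε)| := by
          rw [← sub_mul, abs_mul, abs_of_nonneg (by positivity : (0:ℝ) ≤ 2*ε)]
  have hψinj : Function.Injective ψ := by
    intro v w h
    by_contra hne
    obtain ⟨j, hj⟩ := Function.ne_iff.1 hne
    have := hsepc v w j hj
    rw [h, dist_self] at this
    linarith
  have hsep : ∀ v w : Fin n → Fin M, v ≠ w → ε < dynDist Tsh n (ψ v) (ψ w) := by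
    intro v w hvw
    obtain ⟨j, hj⟩ := Function.ne_iff.1 hvw
    have h1 := hsepc v w j hj
    have h2 := le_dynDist hm (n := n) (j := (j:ℕ)) j.2 (ψ v) (ψ w)
    linarith
  set E : Finset XX := Finset.image ψ Finset.univ with hE
  have hEcard : E.card = M ^ n := by
    rw [hE, Finset.card_image_of_injective _ hψinj, Finset.card_univ, Fintype.card_fun,
      Fintype.card_fin, Fintype.card_fin]
  have hmem : M ^ n ∈ sepSet n ε := by
    refine ⟨E, ?_, hEcard⟩
    intro x hx y hy hxy
    rw [hE, Finset.mem_image] at hx hy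
    obtain ⟨v, _, rfl⟩ := hx
    obtain ⟨w, _, rfl⟩ := hy
    exact hsep v w (fun h => hxy (by rw [h]))
  rw [dynSepNum_eq_sSup hm]
  exact le_csSup (sepSet_bddAbove hm n hη hεK) hmem

omit hm in
lemma exists_K {ε : ℝ} (hε : 0 < ε) :
    ∃ K : ℕ, 4*(ε/16) + 4*(2:ℝ)^(-(K:ℤ)) ≤ ε := by
  obtain ⟨K, hK⟩ := exists_pow_lt_of_lt_one (x := ε/8) (y := (1/2:ℝ)) (by positivity)
    (by norm_num)
  refine ⟨K, ?_⟩
  have : (2:ℝ)^(-(K:ℤ)) = (1/2)^K := by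
    rw [zpow_neg, zpow_natCast, one_div, inv_pow]
  rw [this]
  nlinarith

omit hm in
lemma limsup_le_of_tendsto {f : ℕ → ℝ≥0∞} {r : ℕ → ℝ} {c : ℝ}
    (hfr : ∀ᶠ n in atTop, f n ≤ ENNReal.ofReal (r n))
    (hr : Tendsto r atTop (nhds c)) :
    Filter.atTop.limsup f ≤ ENNReal.ofReal c := by
  have h1 : Filter.atTop.limsup f ≤ Filter.atTop.limsup (fun n => ENNReal.ofReal (r n)) :=
    Filter.limsup_le_limsup hfr
  have h2 : Tendsto (fun n => ENNReal.ofReal (r n)) atTop (nhds (ENNReal.ofReal c)) :=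
    (ENNReal.continuous_ofReal.tendsto c).comp hr
  exact h1.trans (le_of_eq h2.limsup_eq)

lemma dynS_le {ε : ℝ} (hε : 0 < ε) :
    dynS Tsh ε ≤ ENNReal.ofReal (Real.log (⌊16/ε⌋₊ + 1)) := by
  obtain ⟨K, hεK⟩ := exists_K hε
  set B : ℕ := ⌊16/ε⌋₊ + 1 with hB
  have hfloor : ⌊1/(ε/16)⌋₊ = ⌊16/ε⌋₊ := by
    congr 1
    rw [one_div_div]
  have hN : ∀ n, dynSepNum Tsh n ε ≤ B ^ (n + 2*K + 1) := by
    intro n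
    have := dynSepNum_le hm (η := ε/16) (K := K) n (by positivity) hεK
    rwa [hfloor] at this
  have hBc : ((⌊16/ε⌋₊:ℝ) + 1) = (B:ℝ) := by rw [hB]; push_cast; ring
  rw [show Real.log ((⌊16/ε⌋₊:ℝ) + 1) = Real.log (B:ℝ) from by rw [hBc]]
  apply limsup_le_of_tendsto (r := fun n : ℕ => (((n + 2*K + 1:ℕ)):ℝ) * Real.log B / n)
  · filter_upwards [eventually_ge_atTop 1] with n hn
    have hlog : Real.log (dynSepNum Tsh n ε) ≤ ((n + 2*K + 1:ℕ):ℝ) * Real.log B := by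
      rcases Nat.eq_zero_or_pos (dynSepNum Tsh n ε) with h | h
      · rw [h]
        simp only [Nat.cast_zero, Real.log_zero]
        positivity
      · calc Real.log (dynSepNum Tsh n ε) ≤ Real.log ((B:ℝ) ^ (n + 2*K + 1)) := by
              apply Real.log_le_log (by exact_mod_cast h)
              exact_mod_cast hN n
          _ = ((n + 2*K + 1:ℕ):ℝ) * Real.log B := by rw [Real.log_pow]
    have hn0 : (0:ℝ) < n := by exact_mod_cast hn
    calc ENNReal.ofReal (Real.log (dynSepNum Tsh n ε)) / (n : ℝ≥0∞)
        ≤ ENNReal.ofReal (((n + 2*K + 1:ℕ):ℝ) * Real.log B) / (n : ℝ≥0∞) :=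
          ENNReal.div_le_div_right (ENNReal.ofReal_le_ofReal hlog) _
      _ = ENNReal.ofReal (((n + 2*K + 1:ℕ):ℝ) * Real.log B / n) := by
          rw [ENNReal.ofReal_div_of_pos hn0, ENNReal.ofReal_natCast]
  · have h0 : Tendsto (fun n : ℕ => ((2*K+1:ℕ):ℝ)/n * Real.log B) atTop (nhds 0) := by
      have := (tendsto_const_div_atTop_nhds_zero_nat ((2*K+1:ℕ):ℝ)).mul_const (Real.log B)
      simpa using this
    have h1 : Tendsto (fun n : ℕ => Real.log B + ((2*K+1:ℕ):ℝ)/n * Real.log B) atTop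
        (nhds (Real.log B)) := by
      have := (tendsto_const_nhds : Tendsto (fun _ : ℕ => Real.log (B:ℝ)) atTop
        (nhds (Real.log (B:ℝ)))).add h0
      simpa using this
    apply h1.congr'
    filter_upwards [eventually_ge_atTop 1] with n hn
    have hn0 : (n:ℝ) ≠ 0 := by positivity
    push_cast
    field_simp
    ring

lemma dynS_ge {ε : ℝ} (hε : 0 < ε) :
    ENNReal.ofReal (Real.log (⌊1/(2*ε)⌋₊ + 1)) ≤ dynS Tsh ε := by
  obtain ⟨K, hεK⟩ := exists_K hε
  set M : ℕ := ⌊1/(2*ε)⌋₊ + 1 with hM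
  have hMc : ((⌊1/(2*ε)⌋₊:ℝ) + 1) = (M:ℝ) := by rw [hM]; push_cast; ring
  rw [show Real.log ((⌊1/(2*ε)⌋₊:ℝ) + 1) = Real.log (M:ℝ) from by rw [hMc]]
  apply Filter.le_limsup_of_frequently_le _ (Filter.isBoundedUnder_of ⟨⊤, fun n => le_top⟩)
  apply Filter.Eventually.frequently
  filter_upwards [eventually_ge_atTop 1] with n hn
  have hN : (M:ℝ) ^ n ≤ ((dynSepNum Tsh n ε : ℕ):ℝ) := by
    exact_mod_cast dynSepNum_ge hm (η := ε/16) (K := K) n hε (by positivity) hεK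
  have hlog : (n:ℝ) * Real.log M ≤ Real.log (dynSepNum Tsh n ε) := by
    calc (n:ℝ) * Real.log M = Real.log ((M:ℝ)^n) := (Real.log_pow _ _).symm
      _ ≤ _ := Real.log_le_log (by positivity) hN
  have hn0 : (0:ℝ) < n := by exact_mod_cast hn
  calc ENNReal.ofReal (Real.log M)
      = ENNReal.ofReal ((n:ℝ) * Real.log M / n) := by
        congr 1
        field_simp
    _ = ENNReal.ofReal ((n:ℝ) * Real.log M) / (n:ℝ≥0∞) := by
        rw [ENNReal.ofReal_div_of_pos hn0, ENNReal.ofReal_natCast]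
    _ ≤ ENNReal.ofReal (Real.log (dynSepNum Tsh n ε)) / (n:ℝ≥0∞) :=
        ENNReal.div_le_div_right (ENNReal.ofReal_le_ofReal hlog) _

omit hm in
lemma neg_log_tendsto : Tendsto (fun ε : ℝ => -Real.log ε) (nhdsWithin 0 (Set.Ioi 0)) atTop :=
  tendsto_neg_atBot_atTop.comp Real.tendsto_log_nhdsGT_zero

omit hm in
lemma ratio_tendsto (c : ℝ) :
    Tendsto (fun ε : ℝ => (c + -Real.log ε) / (-Real.log ε))
      (nhdsWithin 0 (Set.Ioi 0)) (nhds 1) := by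
  have hv : Tendsto (fun s : ℝ => c / s + 1) atTop (nhds 1) := by
    have := (tendsto_const_nhds (α := ℝ) (x := c)).div_atTop tendsto_id
    simpa using this.add (tendsto_const_nhds (x := (1:ℝ)))
  have h2 := hv.comp neg_log_tendsto
  apply h2.congr'
  filter_upwards [neg_log_tendsto.eventually_ge_atTop 1] with ε hε
  have h0 : -Real.log ε ≠ 0 := by linarith
  show c / (-Real.log ε) + 1 = _
  rw [add_div, div_self h0]

omit hm in
lemma ofReal_ratio_tendsto (c : ℝ) :
    Tendsto (fun ε : ℝ => ENNReal.ofReal ((c + -Real.log ε) / (-Real.log ε)))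
      (nhdsWithin 0 (Set.Ioi 0)) (nhds 1) := by
  have := (ENNReal.continuous_ofReal.tendsto 1).comp (ratio_tendsto c)
  rw [ENNReal.ofReal_one] at this
  exact this

lemma mdim_le_one : mdim Tsh ≤ 1 := by
  rw [mdim]
  have key : ∀ᶠ ε in nhdsWithin (0:ℝ) (Set.Ioi 0),
      dynS Tsh ε / ENNReal.ofReal |Real.log ε|
        ≤ ENNReal.ofReal ((Real.log 17 + -Real.log ε) / (-Real.log ε)) := by
    have hIoo : Set.Ioo (0:ℝ) (1/17) ∈ nhdsWithin (0:ℝ) (Set.Ioi 0) :=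
      Ioo_mem_nhdsGT_of_mem (by constructor <;> norm_num)
    filter_upwards [hIoo] with ε hε
    obtain ⟨hε0, hε1⟩ := hε
    have hlogneg : Real.log ε < 0 := Real.log_neg hε0 (by linarith)
    have habs : |Real.log ε| = -Real.log ε := abs_of_neg hlogneg
    have hnum : Real.log ((⌊16/ε⌋₊:ℝ) + 1) ≤ Real.log 17 + -Real.log ε := by
      have h1 : (⌊16/ε⌋₊:ℝ) ≤ 16/ε := Nat.floor_le (by positivity)
      have h2 : (1:ℝ) ≤ 1/ε := by rw [le_div_iff₀ hε0]; linarith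
      have h3 : (⌊16/ε⌋₊:ℝ) + 1 ≤ 17/ε := by
        have : (16:ℝ)/ε + 1/ε = 17/ε := by ring
        linarith
      calc Real.log ((⌊16/ε⌋₊:ℝ) + 1) ≤ Real.log (17/ε) :=
            Real.log_le_log (by positivity) h3
        _ = Real.log 17 - Real.log ε := Real.log_div (by norm_num) (ne_of_gt hε0)
        _ = Real.log 17 + -Real.log ε := by ring
    rw [habs]
    calc dynS Tsh ε / ENNReal.ofReal (-Real.log ε)
        ≤ ENNReal.ofReal (Real.log ((⌊16/ε⌋₊:ℝ) + 1)) / ENNReal.ofReal (-Real.log ε) :=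
          ENNReal.div_le_div_right (dynS_le hm hε0) _
      _ ≤ ENNReal.ofReal (Real.log 17 + -Real.log ε) / ENNReal.ofReal (-Real.log ε) :=
          ENNReal.div_le_div_right (ENNReal.ofReal_le_ofReal hnum) _
      _ = ENNReal.ofReal ((Real.log 17 + -Real.log ε) / (-Real.log ε)) :=
          (ENNReal.ofReal_div_of_pos (by linarith)).symm
  refine le_trans (Filter.limsup_le_limsup key) ?_
  exact le_of_eq (ofReal_ratio_tendsto (Real.log 17)).limsup_eq

lemma one_le_mdim : 1 ≤ mdim Tsh := by
  rw [mdim]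
  have key : ∀ᶠ ε in nhdsWithin (0:ℝ) (Set.Ioi 0),
      ENNReal.ofReal ((-Real.log 2 + -Real.log ε) / (-Real.log ε))
        ≤ dynS Tsh ε / ENNReal.ofReal |Real.log ε| := by
    have hIoo : Set.Ioo (0:ℝ) (1/2) ∈ nhdsWithin (0:ℝ) (Set.Ioi 0) :=
      Ioo_mem_nhdsGT_of_mem (by constructor <;> norm_num)
    filter_upwards [hIoo] with ε hε
    obtain ⟨hε0, hε1⟩ := hε
    have hlogneg : Real.log ε < 0 := Real.log_neg hε0 (by linarith)
    have habs : |Real.log ε| = -Real.log ε := abs_of_neg hlogneg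
    have hnum : -Real.log 2 + -Real.log ε ≤ Real.log ((⌊1/(2*ε)⌋₊:ℝ) + 1) := by
      have h1 : (1:ℝ)/(2*ε) ≤ (⌊1/(2*ε)⌋₊:ℝ) + 1 := (Nat.lt_floor_add_one _).le
      calc -Real.log 2 + -Real.log ε = Real.log (1/(2*ε)) := by
            rw [Real.log_div (by norm_num) (by positivity), Real.log_one,
              Real.log_mul (by norm_num) (ne_of_gt hε0)]
            ring
        _ ≤ Real.log ((⌊1/(2*ε)⌋₊:ℝ) + 1) := Real.log_le_log (by positivity) h1
    rw [habs]
    calc ENNReal.ofReal ((-Real.log 2 + -Real.log ε) / (-Real.log ε))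
        = ENNReal.ofReal (-Real.log 2 + -Real.log ε) / ENNReal.ofReal (-Real.log ε) :=
          ENNReal.ofReal_div_of_pos (by linarith)
      _ ≤ ENNReal.ofReal (Real.log ((⌊1/(2*ε)⌋₊:ℝ) + 1)) / ENNReal.ofReal (-Real.log ε) :=
          ENNReal.div_le_div_right (ENNReal.ofReal_le_ofReal hnum) _
      _ ≤ dynS Tsh ε / ENNReal.ofReal (-Real.log ε) :=
          ENNReal.div_le_div_right (dynS_ge hm hε0) _
  refine le_trans ?_ (Filter.limsup_le_limsup key)
  exact le_of_eq ((ofReal_ratio_tendsto (-Real.log 2)).limsup_eq).symm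

lemma mdim_eq : mdim Tsh = 1 :=
  le_antisymm (mdim_le_one hm) (one_le_mdim hm)

end WithMetric
end MdimAux
end

/-- The upper metric mean dimension of the shift on `[0,1]^ℤ`, for the metric
`d_T(x,y) = ∑_{k ∈ ℤ} 2^{-|k|} |x_k - y_k|`, equals `1`. -/
theorem mdim_shift_unitInterval
    [m : MetricSpace (ℤ → (Set.Icc (0:ℝ) 1))]
    (hm : ∀ x y : ℤ → (Set.Icc (0:ℝ) 1),
      dist x y = ∑' k : ℤ, (2:ℝ) ^ (-|k|) * dist (x k) (y k)) :
    mdim (fun x : ℤ → (Set.Icc (0:ℝ) 1) => fun k => x (k + 1)) = 1 := by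
  exact MdimAux.mdim_eq hm
end

section
/- Let n ≥ 1, let T be the shift map on ([0,1]^n)^ℤ and let d_T(x,y)=∑_{k∈ℤ} 2^{−|k|} d(x_k,y_k), where d is the standard Euclidean metric on [0,1]^n. Then the upper metric mean dimension satisfies mdim(([0,1]^n)^ℤ, d_T, T) = n. -/
open Filter Set Metric Function
open scoped ENNReal NNReal

set_option maxHeartbeats 1600000

namespace ShiftMdimAux

abbrev Cube (n : ℕ) := Fin n → Set.Icc (0:ℝ) 1
abbrev SeqSp (n : ℕ) := ℤ → Cube n

variable {n : ℕ}

/-- Euclidean distance on the cube. -/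
noncomputable def dE (a b : Cube n) : ℝ := Real.sqrt (∑ i, ((a i : ℝ) - b i) ^ 2)

/-- Weights `2^{-|k|}`. -/
noncomputable def w (k : ℤ) : ℝ := (2⁻¹ : ℝ) ^ k.natAbs

lemma iterate_shift (j : ℕ) (x : SeqSp n) (k : ℤ) :
    ((fun x : SeqSp n => fun k => x (k + 1))^[j] x) k = x (k + j) := by
  induction j generalizing x with
  | zero => simp
  | succ j ih =>
    rw [Function.iterate_succ_apply, ih]
    show x (k + j + 1) = x (k + (j + 1 : ℕ))
    have : k + (j : ℤ) + 1 = k + ((j + 1 : ℕ) : ℤ) := by push_cast; ring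
    rw [this]

lemma dE_nonneg (a b : Cube n) : 0 ≤ dE a b := Real.sqrt_nonneg _

lemma abs_le_dE (a b : Cube n) (i : Fin n) : |(a i : ℝ) - b i| ≤ dE a b := by
  rw [dE, ← Real.sqrt_sq_eq_abs]
  apply Real.sqrt_le_sqrt
  exact Finset.single_le_sum (f := fun i => ((a i : ℝ) - b i) ^ 2)
    (fun i _ => sq_nonneg _) (Finset.mem_univ i)

lemma dE_le (a b : Cube n) {h : ℝ} (hh : 0 ≤ h) (hab : ∀ i, |(a i : ℝ) - b i| ≤ h) :
    dE a b ≤ Real.sqrt n * h := by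
  rw [dE]
  have h1 : ∑ i, ((a i : ℝ) - b i) ^ 2 ≤ ∑ _i : Fin n, h ^ 2 := by
    apply Finset.sum_le_sum
    intro i _
    have := abs_le.mp (hab i)
    exact sq_le_sq' (by linarith [this.1]) this.2
  calc Real.sqrt (∑ i, ((a i : ℝ) - b i) ^ 2) ≤ Real.sqrt ((n : ℝ) * h ^ 2) := by
        apply Real.sqrt_le_sqrt
        simpa using h1
    _ = Real.sqrt n * h := by
        rw [Real.sqrt_mul (by positivity), Real.sqrt_sq hh]

lemma abs_sub_le_one (a b : Cube n) (i : Fin n) : |(a i : ℝ) - b i| ≤ 1 := by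
  have h1 := (a i).2.1; have h2 := (a i).2.2
  have h3 := (b i).2.1; have h4 := (b i).2.2
  rw [abs_le]; constructor <;> linarith

lemma dE_le_sqrt (a b : Cube n) : dE a b ≤ Real.sqrt n := by
  have := dE_le a b zero_le_one (abs_sub_le_one a b)
  simpa using this

lemma w_nonneg (k : ℤ) : 0 ≤ w k := by rw [w]; positivity

lemma w_pow (k : ℤ) : (2:ℝ) ^ (-|k|) = w k := by
  have habs : |k| = (k.natAbs : ℤ) := Int.abs_eq_natAbs k
  rw [habs, w, zpow_neg, zpow_natCast, ← inv_pow]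

lemma geo : HasSum (fun m : ℕ => (2⁻¹ : ℝ) ^ m) 2 := by
  simpa [one_div] using hasSum_geometric_two

lemma hasSum_w : HasSum w (3 : ℝ) := by
  have h1 : HasSum (fun m : ℕ => w m) 2 := by
    have he : (fun m : ℕ => w m) = fun m : ℕ => (2⁻¹ : ℝ) ^ m := by
      funext m; simp [w]
    rw [he]; exact geo
  have h2 : HasSum (fun m : ℕ => w (-(m + 1))) 1 := by
    have he : (fun m : ℕ => w (-(m + 1))) = fun m : ℕ => (2⁻¹ : ℝ) * (2⁻¹ : ℝ) ^ m := by
      funext m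
      have : ((-((m : ℤ) + 1)).natAbs) = m + 1 := by omega
      rw [w, this, pow_succ]
      ring
    rw [he]
    have h := geo.mul_left (2⁻¹ : ℝ)
    rw [show (2⁻¹ : ℝ) * 2 = 1 by norm_num] at h
    exact h
  have := h1.of_nat_of_neg_add_one h2
  norm_num at this
  exact this

lemma gsum (K : ℕ) :
    HasSum (fun m : ℕ => if m ≤ K then (0:ℝ) else (2⁻¹ : ℝ) ^ m) ((2⁻¹ : ℝ) ^ K) := by
  have h3 : HasSum (fun m : ℕ => if m + (K + 1) ≤ K then (0:ℝ) else (2⁻¹ : ℝ) ^ (m + (K + 1)))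
      ((2⁻¹ : ℝ) ^ K) := by
    have he : (fun m : ℕ => if m + (K + 1) ≤ K then (0:ℝ) else (2⁻¹ : ℝ) ^ (m + (K + 1)))
        = fun m : ℕ => (2⁻¹ : ℝ) ^ (K + 1) * (2⁻¹ : ℝ) ^ m := by
      funext m
      rw [if_neg (by omega), pow_add]
      ring
    rw [he]
    have h := geo.mul_left ((2⁻¹ : ℝ) ^ (K + 1))
    rw [show (2⁻¹ : ℝ) ^ (K + 1) * 2 = (2⁻¹ : ℝ) ^ K by rw [pow_succ]; ring] at h
    exact h
  have h4 := (hasSum_nat_add_iff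
    (f := fun m : ℕ => if m ≤ K then (0:ℝ) else (2⁻¹ : ℝ) ^ m) (K + 1)).mp h3
  have h5 : ∑ i ∈ Finset.range (K + 1), (if i ≤ K then (0:ℝ) else (2⁻¹ : ℝ) ^ i) = 0 :=
    Finset.sum_eq_zero fun i hi => if_pos (Nat.lt_succ_iff.mp (Finset.mem_range.mp hi))
  rw [h5, add_zero] at h4
  exact h4

lemma hasSum_tail (K : ℕ) :
    HasSum (fun k : ℤ => if k.natAbs ≤ K then 0 else w k) (2 * (2⁻¹ : ℝ) ^ K) := by
  have h1 : HasSum (fun m : ℕ => if (m : ℤ).natAbs ≤ K then (0:ℝ) else w m) ((2⁻¹ : ℝ) ^ K) := by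
    have he : (fun m : ℕ => if (m : ℤ).natAbs ≤ K then (0:ℝ) else w m)
        = fun m : ℕ => if m ≤ K then (0:ℝ) else (2⁻¹ : ℝ) ^ m := by
      funext m
      simp [w]
    rw [he]
    exact gsum K
  have h2 : HasSum (fun m : ℕ => if (-((m : ℤ) + 1)).natAbs ≤ K then (0:ℝ) else w (-((m : ℤ) + 1)))
      ((2⁻¹ : ℝ) ^ K) := by
    have he : (fun m : ℕ => if (-((m : ℤ) + 1)).natAbs ≤ K then (0:ℝ) else w (-((m : ℤ) + 1)))
        = fun m : ℕ => if m + 1 ≤ K then (0:ℝ) else (2⁻¹ : ℝ) ^ (m + 1) := by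
      funext m
      have hna : ((-((m : ℤ) + 1)).natAbs) = m + 1 := by omega
      simp only [w, hna]
    rw [he]
    apply (hasSum_nat_add_iff
      (f := fun m : ℕ => if m ≤ K then (0:ℝ) else (2⁻¹ : ℝ) ^ m) 1).mpr
    have hg0 : ∑ i ∈ Finset.range 1, (if i ≤ K then (0:ℝ) else (2⁻¹ : ℝ) ^ i) = 0 := by
      simp
    rw [hg0, add_zero]
    exact gsum K
  have := HasSum.of_nat_of_neg_add_one
    (f := fun k : ℤ => if k.natAbs ≤ K then (0:ℝ) else w k) h1 h2
  convert this using 1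
  ring

lemma summable_wdE (x y : SeqSp n) : Summable (fun k => w k * dE (x k) (y k)) := by
  apply Summable.of_nonneg_of_le
    (fun k => mul_nonneg (w_nonneg k) (dE_nonneg _ _))
    (fun k => mul_le_mul_of_nonneg_left (dE_le_sqrt (x k) (y k)) (w_nonneg k))
  exact hasSum_w.summable.mul_right _

section WithMetric

variable [MetricSpace (SeqSp n)]
variable (hm : ∀ x y : SeqSp n,
    dist x y = ∑' k : ℤ, (2:ℝ) ^ (-|k|) *
      Real.sqrt (∑ i : Fin n, ((x k i : ℝ) - (y k i : ℝ)) ^ 2))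
include hm

lemma dist_eq (x y : SeqSp n) : dist x y = ∑' k : ℤ, w k * dE (x k) (y k) := by
  rw [hm]
  exact tsum_congr fun k => by rw [w_pow]; rfl

lemma dE_le_dist (x y : SeqSp n) : dE (x 0) (y 0) ≤ dist x y := by
  rw [dist_eq hm]
  have := Summable.le_tsum (summable_wdE x y) 0
    (fun k _ => mul_nonneg (w_nonneg k) (dE_nonneg _ _))
  simpa [w] using this

lemma dist_le_window (x y : SeqSp n) {h : ℝ} (hh : 0 ≤ h) (K : ℕ)
    (hw : ∀ k : ℤ, k.natAbs ≤ K → dE (x k) (y k) ≤ h) :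
    dist x y ≤ 3 * h + 2 * Real.sqrt n * (2⁻¹ : ℝ) ^ K := by
  rw [dist_eq hm]
  have hG : HasSum (fun k : ℤ => h * w k + Real.sqrt n * (if k.natAbs ≤ K then 0 else w k))
      (h * 3 + Real.sqrt n * (2 * (2⁻¹ : ℝ) ^ K)) :=
    (hasSum_w.mul_left h).add ((hasSum_tail K).mul_left _)
  have hpt : ∀ k : ℤ, w k * dE (x k) (y k)
      ≤ h * w k + Real.sqrt n * (if k.natAbs ≤ K then 0 else w k) := by
    intro k
    by_cases hk : k.natAbs ≤ K
    · rw [if_pos hk, mul_zero, add_zero]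
      calc w k * dE (x k) (y k) ≤ w k * h :=
            mul_le_mul_of_nonneg_left (hw k hk) (w_nonneg k)
        _ = h * w k := by ring
    · rw [if_neg hk]
      have h1 : w k * dE (x k) (y k) ≤ w k * Real.sqrt n :=
        mul_le_mul_of_nonneg_left (dE_le_sqrt (x k) (y k)) (w_nonneg k)
      have h2 : 0 ≤ h * w k := mul_nonneg hh (w_nonneg k)
      nlinarith
  have := Summable.tsum_le_tsum hpt (summable_wdE x y) hG.summable
  rw [hG.tsum_eq] at this
  calc (∑' k : ℤ, w k * dE (x k) (y k)) ≤ h * 3 + Real.sqrt n * (2 * (2⁻¹ : ℝ) ^ K) := this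
    _ = 3 * h + 2 * Real.sqrt n * (2⁻¹ : ℝ) ^ K := by ring

end WithMetric

lemma dist_le_dynDist {X : Type*} [MetricSpace X] (T : X → X) {N j : ℕ} (hj : j < N)
    (x y : X) : dist (T^[j] x) (T^[j] y) ≤ dynDist T N x y := by
  rw [dynDist, ← coe_nndist]
  exact_mod_cast Finset.le_sup (f := fun k => nndist (T^[k] x) (T^[k] y))
    (Finset.mem_range.mpr hj)

lemma dynDist_le {X : Type*} [MetricSpace X] (T : X → X) (N : ℕ) {x y : X} {e : ℝ}
    (he : 0 ≤ e) (h : ∀ j < N, dist (T^[j] x) (T^[j] y) ≤ e) : dynDist T N x y ≤ e := by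
  rw [dynDist]
  have hsup : (Finset.range N).sup (fun k => nndist (T^[k] x) (T^[k] y)) ≤ e.toNNReal := by
    apply Finset.sup_le
    intro k hk
    rw [← NNReal.coe_le_coe, coe_nndist, Real.coe_toNNReal _ he]
    exact h k (Finset.mem_range.mp hk)
  calc ((((Finset.range N).sup (fun k => nndist (T^[k] x) (T^[k] y))) : ℝ≥0) : ℝ)
      ≤ (e.toNNReal : ℝ) := NNReal.coe_le_coe.mpr hsup
    _ = e := Real.coe_toNNReal _ he

section Counting

variable [MetricSpace (SeqSp n)]
variable (hm : ∀ x y : SeqSp n,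
    dist x y = ∑' k : ℤ, (2:ℝ) ^ (-|k|) *
      Real.sqrt (∑ i : Fin n, ((x k i : ℝ) - (y k i : ℝ)) ^ 2))
include hm

lemma sep_card_le (hn : 1 ≤ n) {ε : ℝ} (hε : 0 < ε) {K N : ℕ}
    (hK : 2 * Real.sqrt n * (2⁻¹ : ℝ) ^ K ≤ ε / 2) (E : Finset (SeqSp n))
    (hsep : ∀ x ∈ E, ∀ y ∈ E, x ≠ y →
      ε < dynDist (fun x : SeqSp n => fun k => x (k + 1)) N x y) :
    E.card ≤ (⌊6 * Real.sqrt n / ε⌋₊ + 1) ^ ((N + 2 * K) * n) := by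
  classical
  have hs1 : (1:ℝ) ≤ Real.sqrt n := Real.one_le_sqrt.mpr (by exact_mod_cast hn)
  have hs0 : (0:ℝ) < Real.sqrt n := lt_of_lt_of_le zero_lt_one hs1
  have hr0 : (0:ℝ) < 6 * Real.sqrt n / ε := by positivity
  set r : ℝ := 6 * Real.sqrt n / ε with hr_def
  set M : ℕ := ⌊r⌋₊ + 1 with hM_def
  set W : Finset ℤ := Finset.Icc (-(K:ℤ)) ((N:ℤ) - 1 + K) with hW_def
  have hWcard : W.card = N + 2 * K := by
    rw [hW_def, Int.card_Icc]
    omega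
  have hinj : Set.InjOn
      (fun x : SeqSp n => fun (k : W) (i : Fin n) => ⌊(x (k:ℤ) i : ℝ) * r⌋₊) E := by
    intro x hx y hy hPhi
    by_contra hxy
    have hlt := hsep x hx y hy hxy
    have hle : dynDist (fun x : SeqSp n => fun k => x (k + 1)) N x y ≤ ε := by
      apply dynDist_le _ _ hε.le
      intro j hj
      have hwin : ∀ k : ℤ, k.natAbs ≤ K →
          dE (((fun x : SeqSp n => fun k => x (k + 1))^[j] x) k)
             (((fun x : SeqSp n => fun k => x (k + 1))^[j] y) k) ≤ ε / 6 := by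
        intro k hk
        rw [iterate_shift, iterate_shift]
        have hqW : k + (j:ℤ) ∈ W := by
          rw [hW_def, Finset.mem_Icc]
          omega
        have hcoord : ∀ i : Fin n,
            |(x (k + (j:ℤ)) i : ℝ) - y (k + (j:ℤ)) i| ≤ ε / (6 * Real.sqrt n) := by
          intro i
          have hfx : ⌊(x (k + (j:ℤ)) i : ℝ) * r⌋₊ = ⌊(y (k + (j:ℤ)) i : ℝ) * r⌋₊ :=
            congrFun (congrFun hPhi ⟨k + (j:ℤ), hqW⟩) i
          have hax : (0:ℝ) ≤ (x (k + (j:ℤ)) i : ℝ) := (x _ i).2.1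
          have hay : (0:ℝ) ≤ (y (k + (j:ℤ)) i : ℝ) := (y _ i).2.1
          have h1 := Nat.lt_floor_add_one ((x (k + (j:ℤ)) i : ℝ) * r)
          have h2 := Nat.lt_floor_add_one ((y (k + (j:ℤ)) i : ℝ) * r)
          have h3 := Nat.floor_le (mul_nonneg hax hr0.le)
          have h4 := Nat.floor_le (mul_nonneg hay hr0.le)
          have hfx' : ((⌊(x (k + (j:ℤ)) i : ℝ) * r⌋₊ : ℕ) : ℝ)
              = ((⌊(y (k + (j:ℤ)) i : ℝ) * r⌋₊ : ℕ) : ℝ) := by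
            exact_mod_cast congrArg (fun q : ℕ => (q:ℝ)) hfx
          have hsub : |(x (k + (j:ℤ)) i : ℝ) - y (k + (j:ℤ)) i| * r ≤ 1 := by
            rw [← abs_of_nonneg hr0.le, ← abs_mul, sub_mul]
            rw [abs_le]
            constructor <;> nlinarith
          have hdivle : |(x (k + (j:ℤ)) i : ℝ) - y (k + (j:ℤ)) i| ≤ 1 / r := by
            rw [le_div_iff₀ hr0]
            exact hsub
          have hrr : 1 / r = ε / (6 * Real.sqrt n) := by
            rw [hr_def]
            field_simp
          rwa [hrr] at hdivle
        have hdE := dE_le (x (k + (j:ℤ))) (y (k + (j:ℤ))) (by positivity) hcoord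
        calc dE (x (k + (j:ℤ))) (y (k + (j:ℤ))) ≤ Real.sqrt n * (ε / (6 * Real.sqrt n)) := hdE
          _ = ε / 6 := by field_simp
      have hd := dist_le_window hm
        ((fun x : SeqSp n => fun k => x (k + 1))^[j] x)
        ((fun x : SeqSp n => fun k => x (k + 1))^[j] y)
        (by positivity : (0:ℝ) ≤ ε / 6) K hwin
      calc dist ((fun x : SeqSp n => fun k => x (k + 1))^[j] x)
            ((fun x : SeqSp n => fun k => x (k + 1))^[j] y)
          ≤ 3 * (ε / 6) + 2 * Real.sqrt n * (2⁻¹ : ℝ) ^ K := hd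
        _ ≤ ε / 2 + ε / 2 := by
            have : 3 * (ε / 6) = ε / 2 := by ring
            linarith [hK]
        _ = ε := by ring
    exact absurd hlt (not_lt.mpr hle)
  have hmaps : ∀ x ∈ E, (fun (k : W) (i : Fin n) => ⌊(x (k:ℤ) i : ℝ) * r⌋₊) ∈
      Fintype.piFinset (fun _ : W => Fintype.piFinset (fun _ : Fin n => Finset.range M)) := by
    intro x _
    rw [Fintype.mem_piFinset]
    intro k
    rw [Fintype.mem_piFinset]
    intro i
    rw [Finset.mem_range, hM_def]
    have hle : (x (k:ℤ) i : ℝ) * r ≤ r := mul_le_of_le_one_left hr0.le (x (k:ℤ) i).2.2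
    exact Nat.lt_succ_of_le (Nat.floor_le_floor hle)
  have hcard := Finset.card_le_card_of_injOn _ hmaps hinj
  have hpicard : (Fintype.piFinset
      (fun _ : W => Fintype.piFinset (fun _ : Fin n => Finset.range M))).card
      = M ^ ((N + 2 * K) * n) := by
    rw [Fintype.card_piFinset]
    have hin : ∀ _k : W, (Fintype.piFinset (fun _ : Fin n => Finset.range M)).card = M ^ n := by
      intro k
      rw [Fintype.card_piFinset]
      simp [Finset.card_range]
    rw [Finset.prod_congr rfl (fun k _ => hin k), Finset.prod_const, Finset.card_univ,
      Fintype.card_coe, hWcard, ← pow_mul, Nat.mul_comm]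
  rw [hpicard] at hcard
  exact hcard

lemma sepSet_bddAbove (hn : 1 ≤ n) {ε : ℝ} (hε : 0 < ε) (N : ℕ) :
    BddAbove {m | ∃ E : Finset (SeqSp n),
      (∀ x ∈ E, ∀ y ∈ E, x ≠ y →
        ε < dynDist (fun x : SeqSp n => fun k => x (k + 1)) N x y) ∧ E.card = m} := by
  obtain ⟨K, hKlt⟩ := exists_pow_lt_of_lt_one
    (show (0:ℝ) < ε / (4 * Real.sqrt n) by
      have hs1 : (1:ℝ) ≤ Real.sqrt n := Real.one_le_sqrt.mpr (by exact_mod_cast hn)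
      positivity)
    (show (2⁻¹:ℝ) < 1 by norm_num)
  have hs1 : (1:ℝ) ≤ Real.sqrt n := Real.one_le_sqrt.mpr (by exact_mod_cast hn)
  have hK : 2 * Real.sqrt n * (2⁻¹ : ℝ) ^ K ≤ ε / 2 := by
    have hp : (0:ℝ) ≤ (2⁻¹:ℝ) ^ K := by positivity
    have := mul_le_mul_of_nonneg_left hKlt.le (show (0:ℝ) ≤ 2 * Real.sqrt n by positivity)
    calc 2 * Real.sqrt n * (2⁻¹ : ℝ) ^ K ≤ 2 * Real.sqrt n * (ε / (4 * Real.sqrt n)) := this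
      _ = ε / 2 := by field_simp; ring
  refine ⟨(⌊6 * Real.sqrt n / ε⌋₊ + 1) ^ ((N + 2 * K) * n), ?_⟩
  rintro mcard ⟨E, hsep, rfl⟩
  exact sep_card_le hm hn hε hK E hsep

lemma dynSepNum_le (hn : 1 ≤ n) {ε : ℝ} (hε : 0 < ε) {K N : ℕ}
    (hK : 2 * Real.sqrt n * (2⁻¹ : ℝ) ^ K ≤ ε / 2) :
    dynSepNum (fun x : SeqSp n => fun k => x (k + 1)) N ε
      ≤ (⌊6 * Real.sqrt n / ε⌋₊ + 1) ^ ((N + 2 * K) * n) := by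
  apply csSup_le'
  rintro mcard ⟨E, hsep, rfl⟩
  exact sep_card_le hm hn hε hK E hsep

lemma one_le_dynSepNum (hn : 1 ≤ n) {ε : ℝ} (hε : 0 < ε) (N : ℕ) :
    1 ≤ dynSepNum (fun x : SeqSp n => fun k => x (k + 1)) N ε := by
  apply le_csSup (sepSet_bddAbove hm hn hε N)
  refine ⟨{fun _ _ => ⟨0, Set.left_mem_Icc.mpr zero_le_one⟩}, ?_, Finset.card_singleton _⟩
  intro x hx y hy hxy
  rw [Finset.mem_singleton] at hx hy
  exact absurd (hx.trans hy.symm) hxy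

lemma dynSepNum_ge (hn : 1 ≤ n) {ε : ℝ} (hε : 0 < ε) {N : ℕ} (hN : 1 ≤ N) :
    (⌊1 / (2 * ε)⌋₊ + 1) ^ (n * N)
      ≤ dynSepNum (fun x : SeqSp n => fun k => x (k + 1)) N ε := by
  classical
  set M₁ : ℕ := ⌊1 / (2 * ε)⌋₊ + 1 with hM1
  have hval : ∀ jv : ℕ, jv < M₁ → (jv : ℝ) * (2 * ε) ∈ Set.Icc (0:ℝ) 1 := by
    intro jv hjv
    constructor
    · positivity
    · have h1 : (jv:ℝ) ≤ (⌊1 / (2 * ε)⌋₊ : ℝ) := by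
        exact_mod_cast Nat.lt_succ_iff.mp hjv
      have h2 : (⌊1 / (2 * ε)⌋₊ : ℝ) ≤ 1 / (2 * ε) := Nat.floor_le (by positivity)
      calc (jv:ℝ) * (2 * ε) ≤ (1 / (2 * ε)) * (2 * ε) :=
            mul_le_mul_of_nonneg_right (h1.trans h2) (by positivity)
        _ = 1 := by field_simp
  set f : (Fin N → Fin n → Fin M₁) → SeqSp n := fun g k i =>
    if hk : 0 ≤ k ∧ k < (N:ℤ) then
      ⟨((g ⟨k.toNat, by omega⟩ i : ℕ) : ℝ) * (2 * ε), hval _ (g ⟨k.toNat, by omega⟩ i).isLt⟩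
    else ⟨0, Set.left_mem_Icc.mpr zero_le_one⟩ with hf
  have hfval : ∀ g (a : Fin N) (i : Fin n),
      ((f g ((a:ℕ):ℤ) i : ℝ)) = ((g a i : ℕ) : ℝ) * (2 * ε) := by
    intro g a i
    rw [hf]
    simp only
    rw [dif_pos ⟨Int.natCast_nonneg _, by exact_mod_cast a.isLt⟩]
    simp
  have hinj : Function.Injective f := by
    intro g g' hgg
    funext a i
    have h1 : ((g a i : ℕ) : ℝ) * (2 * ε) = ((g' a i : ℕ) : ℝ) * (2 * ε) := by
      rw [← hfval g a i, ← hfval g' a i]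
      exact congrArg Subtype.val (congrFun (congrFun hgg ((a:ℕ):ℤ)) i)
    have h2 : ((g a i : ℕ) : ℝ) = ((g' a i : ℕ) : ℝ) :=
      mul_right_cancel₀ (by positivity) h1
    have h3 : (g a i : ℕ) = (g' a i : ℕ) := by exact_mod_cast h2
    exact Fin.ext h3
  set E := Finset.image f Finset.univ with hE
  have hsep : ∀ x ∈ E, ∀ y ∈ E, x ≠ y →
      ε < dynDist (fun x : SeqSp n => fun k => x (k + 1)) N x y := by
    intro x hx y hy hxy
    obtain ⟨g, -, rfl⟩ := Finset.mem_image.mp hx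
    obtain ⟨g', -, rfl⟩ := Finset.mem_image.mp hy
    have hgg : g ≠ g' := fun h => hxy (by rw [h])
    have hdiff : ∃ a i, g a i ≠ g' a i := by
      by_contra hcon
      push_neg at hcon
      exact hgg (funext fun a => funext fun i => hcon a i)
    obtain ⟨a, i, hai⟩ := hdiff
    have h2e : 2 * ε ≤ |((f g ((a:ℕ):ℤ) i : ℝ)) - ((f g' ((a:ℕ):ℤ) i : ℝ))| := by
      rw [hfval, hfval, ← sub_mul, abs_mul,
        abs_of_nonneg (by positivity : (0:ℝ) ≤ 2 * ε)]
      have hne : (g a i : ℕ) ≠ (g' a i : ℕ) := fun h => hai (Fin.ext h)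
      have hzne : ((g a i : ℕ):ℤ) - ((g' a i : ℕ):ℤ) ≠ 0 := by
        intro h
        exact hne (by omega)
      have h1 : (1:ℤ) ≤ |((g a i : ℕ):ℤ) - ((g' a i : ℕ):ℤ)| := Int.one_le_abs hzne
      have h1r : (1:ℝ) ≤ |((g a i : ℕ):ℝ) - ((g' a i : ℕ):ℝ)| := by exact_mod_cast h1
      nlinarith
    have hdE : 2 * ε ≤ dE (f g ((a:ℕ):ℤ)) (f g' ((a:ℕ):ℤ)) :=
      le_trans h2e (abs_le_dE _ _ i)
    have hshift := dE_le_dist hm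
      ((fun x : SeqSp n => fun k => x (k + 1))^[(a:ℕ)] (f g))
      ((fun x : SeqSp n => fun k => x (k + 1))^[(a:ℕ)] (f g'))
    rw [iterate_shift, iterate_shift, zero_add] at hshift
    have hdyn := dist_le_dynDist (fun x : SeqSp n => fun k => x (k + 1))
      (a.isLt) (f g) (f g')
    calc ε < 2 * ε := by linarith
      _ ≤ dE (f g ((a:ℕ):ℤ)) (f g' ((a:ℕ):ℤ)) := hdE
      _ ≤ dist ((fun x : SeqSp n => fun k => x (k + 1))^[(a:ℕ)] (f g))
            ((fun x : SeqSp n => fun k => x (k + 1))^[(a:ℕ)] (f g')) := hshift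
      _ ≤ dynDist (fun x : SeqSp n => fun k => x (k + 1)) N (f g) (f g') := hdyn
  have hcard : E.card = M₁ ^ (n * N) := by
    rw [hE, Finset.card_image_of_injective _ hinj, Finset.card_univ]
    rw [Fintype.card_fun, Fintype.card_fun, Fintype.card_fin, Fintype.card_fin,
      Fintype.card_fin, ← pow_mul]
  exact le_csSup (sepSet_bddAbove hm hn hε N) ⟨E, hsep, hcard⟩


omit hm in
lemma exists_K (hn : 1 ≤ n) {ε : ℝ} (hε : 0 < ε) :
    ∃ K : ℕ, 2 * Real.sqrt n * (2⁻¹ : ℝ) ^ K ≤ ε / 2 := by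
  have hs1 : (1:ℝ) ≤ Real.sqrt n := Real.one_le_sqrt.mpr (by exact_mod_cast hn)
  obtain ⟨K, hKlt⟩ := exists_pow_lt_of_lt_one
    (show (0:ℝ) < ε / (4 * Real.sqrt n) by positivity)
    (show (2⁻¹:ℝ) < 1 by norm_num)
  refine ⟨K, ?_⟩
  have := mul_le_mul_of_nonneg_left hKlt.le
    (show (0:ℝ) ≤ 2 * Real.sqrt n by positivity)
  calc 2 * Real.sqrt n * (2⁻¹ : ℝ) ^ K ≤ 2 * Real.sqrt n * (ε / (4 * Real.sqrt n)) := this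
    _ = ε / 2 := by field_simp; ring

lemma dynS_le (hn : 1 ≤ n) {ε : ℝ} (hε : 0 < ε) :
    dynS (fun x : SeqSp n => fun k => x (k + 1)) ε
      ≤ ENNReal.ofReal (n * Real.log ((⌊6 * Real.sqrt n / ε⌋₊ + 1 : ℕ) : ℝ)) := by
  obtain ⟨K, hK⟩ := exists_K hn hε
  set M : ℕ := ⌊6 * Real.sqrt n / ε⌋₊ + 1 with hMdef
  set c : ℝ := n * Real.log M with hc
  have hM1 : (1:ℝ) ≤ (M:ℝ) := by exact_mod_cast Nat.le_add_left 1 _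
  have hc0 : 0 ≤ c := mul_nonneg (Nat.cast_nonneg n) (Real.log_nonneg hM1)
  rw [dynS]
  apply ENNReal.le_of_forall_pos_le_add
  intro η hη _
  set D : ℝ≥0∞ := ENNReal.ofReal ((2 * K) * c) with hD
  have hDtop : D ≠ ⊤ := ENNReal.ofReal_ne_top
  have hηne : (η : ℝ≥0∞) ≠ 0 := by exact_mod_cast hη.ne'
  have hDη : D / (η : ℝ≥0∞) ≠ ⊤ := by
    simp [ENNReal.div_eq_top, hDtop, hηne]
  obtain ⟨N₀, hN₀⟩ := ENNReal.exists_nat_gt hDη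
  apply Filter.limsup_le_of_le (by isBoundedDefault)
  filter_upwards [Filter.eventually_ge_atTop (max N₀ 1)] with N hN
  have hN1 : 1 ≤ N := le_trans (le_max_right _ _) hN
  have hNN0 : N₀ ≤ N := le_trans (le_max_left _ _) hN
  have hNne0 : (N : ℝ≥0∞) ≠ 0 := by exact_mod_cast Nat.one_le_iff_ne_zero.mp hN1
  have hNtop : (N : ℝ≥0∞) ≠ ⊤ := ENNReal.natCast_ne_top N
  have hsep_le := dynSepNum_le hm hn hε hK (N := N)
  have hone := one_le_dynSepNum hm hn hε N
  have hlog : Real.log (dynSepNum (fun x : SeqSp n => fun k => x (k + 1)) N ε)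
      ≤ (N:ℝ) * c + (2 * K) * c := by
    have hpos : (0:ℝ) < (dynSepNum (fun x : SeqSp n => fun k => x (k + 1)) N ε : ℝ) := by
      exact_mod_cast hone
    have hle2 : ((dynSepNum (fun x : SeqSp n => fun k => x (k + 1)) N ε : ℕ) : ℝ)
        ≤ ((M : ℝ)) ^ ((N + 2 * K) * n) := by exact_mod_cast hsep_le
    calc Real.log _ ≤ Real.log ((M:ℝ) ^ ((N + 2 * K) * n)) := Real.log_le_log hpos hle2
      _ = (((N + 2 * K) * n : ℕ) : ℝ) * Real.log M := by
          rw [Real.log_pow]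
      _ = (N:ℝ) * c + (2 * K) * c := by
          rw [hc]
          push_cast
          ring
  have h1 : ENNReal.ofReal (Real.log (dynSepNum (fun x : SeqSp n => fun k => x (k + 1)) N ε))
      ≤ (N : ℝ≥0∞) * ENNReal.ofReal c + D := by
    calc ENNReal.ofReal (Real.log (dynSepNum (fun x : SeqSp n => fun k => x (k + 1)) N ε))
        ≤ ENNReal.ofReal ((N:ℝ) * c + (2 * K) * c) := ENNReal.ofReal_le_ofReal hlog
      _ = ENNReal.ofReal ((N:ℝ) * c) + D := by
          rw [ENNReal.ofReal_add (by positivity) (by positivity), hD]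
      _ = (N : ℝ≥0∞) * ENNReal.ofReal c + D := by
          rw [ENNReal.ofReal_mul (Nat.cast_nonneg N), ENNReal.ofReal_natCast]
  have h3 : ENNReal.ofReal (Real.log (dynSepNum (fun x : SeqSp n => fun k => x (k + 1)) N ε))
        / (N : ℝ≥0∞) ≤ ENNReal.ofReal c + D / (N : ℝ≥0∞) := by
    calc ENNReal.ofReal (Real.log (dynSepNum (fun x : SeqSp n => fun k => x (k + 1)) N ε))
          / (N : ℝ≥0∞)
        ≤ ((N : ℝ≥0∞) * ENNReal.ofReal c + D) / (N : ℝ≥0∞) := ENNReal.div_le_div_right h1 _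
      _ = (N : ℝ≥0∞) * ENNReal.ofReal c / (N : ℝ≥0∞) + D / (N : ℝ≥0∞) := ENNReal.add_div
      _ = ENNReal.ofReal c + D / (N : ℝ≥0∞) := by
          rw [mul_comm, mul_div_assoc, ENNReal.div_self hNne0 hNtop, mul_one]
  have h4 : D / (N : ℝ≥0∞) ≤ (η : ℝ≥0∞) := by
    apply ENNReal.div_le_of_le_mul
    have hle : D / (η : ℝ≥0∞) ≤ (N : ℝ≥0∞) := le_trans hN₀.le (by exact_mod_cast hNN0)
    have hmul := mul_le_mul_right hle (η : ℝ≥0∞)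
    rwa [ENNReal.mul_div_cancel hηne ENNReal.coe_ne_top] at hmul
  exact le_trans h3 (add_le_add le_rfl h4)

lemma dynS_ge (hn : 1 ≤ n) {ε : ℝ} (hε : 0 < ε) :
    ENNReal.ofReal (n * Real.log ((⌊1 / (2 * ε)⌋₊ + 1 : ℕ) : ℝ))
      ≤ dynS (fun x : SeqSp n => fun k => x (k + 1)) ε := by
  set M₁ : ℕ := ⌊1 / (2 * ε)⌋₊ + 1 with hM1def
  rw [dynS]
  apply Filter.le_limsup_of_frequently_le'
  apply Filter.Eventually.frequently
  filter_upwards [Filter.eventually_ge_atTop 1] with N hN1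
  have hge := dynSepNum_ge hm hn hε hN1
  have hM1pos : (0:ℝ) < (M₁:ℝ) := by
    have : 0 < M₁ := Nat.succ_pos _
    exact_mod_cast this
  have hpow_pos : (0:ℝ) < ((M₁ ^ (n * N) : ℕ) : ℝ) := by
    have : 0 < M₁ ^ (n * N) := pow_pos (Nat.succ_pos _) _
    exact_mod_cast this
  have hNne0 : (N : ℝ≥0∞) ≠ 0 := by exact_mod_cast Nat.one_le_iff_ne_zero.mp hN1
  have hNtop : (N : ℝ≥0∞) ≠ ⊤ := ENNReal.natCast_ne_top N
  have hlog : (N:ℝ) * ((n:ℝ) * Real.log M₁)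
      ≤ Real.log (dynSepNum (fun x : SeqSp n => fun k => x (k + 1)) N ε) := by
    have hle : ((M₁ ^ (n * N) : ℕ) : ℝ)
        ≤ (dynSepNum (fun x : SeqSp n => fun k => x (k + 1)) N ε : ℝ) := by
      exact_mod_cast hge
    calc (N:ℝ) * ((n:ℝ) * Real.log M₁) = ((n * N : ℕ) : ℝ) * Real.log M₁ := by
          push_cast; ring
      _ = Real.log ((M₁:ℝ) ^ (n * N)) := (Real.log_pow _ _).symm
      _ = Real.log ((M₁ ^ (n * N) : ℕ) : ℝ) := by push_cast; ring_nf
      _ ≤ _ := Real.log_le_log hpow_pos hle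
  rw [ENNReal.le_div_iff_mul_le (Or.inl hNne0) (Or.inl hNtop)]
  calc ENNReal.ofReal ((n:ℝ) * Real.log M₁) * (N : ℝ≥0∞)
      = ENNReal.ofReal (((n:ℝ) * Real.log M₁) * (N:ℝ)) := by
        rw [ENNReal.ofReal_mul' (Nat.cast_nonneg N), ENNReal.ofReal_natCast]
    _ ≤ ENNReal.ofReal (Real.log (dynSepNum (fun x : SeqSp n => fun k => x (k + 1)) N ε)) :=
        ENNReal.ofReal_le_ofReal (by linarith [hlog])

lemma mdim_le (hn : 1 ≤ n) :
    mdim (fun x : SeqSp n => fun k => x (k + 1)) ≤ (n : ℝ≥0∞) := by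
  rw [mdim]
  apply ENNReal.le_of_forall_pos_le_add
  intro η hη _
  have hs1 : (1:ℝ) ≤ Real.sqrt n := Real.one_le_sqrt.mpr (by exact_mod_cast hn)
  set C : ℝ := 6 * Real.sqrt n + 1 with hC
  have hC1 : (1:ℝ) ≤ C := by rw [hC]; linarith
  have hC0 : (0:ℝ) < C := lt_of_lt_of_le zero_lt_one hC1
  have hlogC0 : 0 ≤ Real.log C := Real.log_nonneg hC1
  have hη' : (0:ℝ) < (η:ℝ) := hη
  set R : ℝ := ((n:ℝ) * Real.log C) / (η:ℝ) + 1 with hR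
  have hRnn : 0 ≤ ((n:ℝ) * Real.log C) / (η:ℝ) := by positivity
  have hR1 : (1:ℝ) ≤ R := by rw [hR]; linarith
  have hR0 : (0:ℝ) < R := lt_of_lt_of_le zero_lt_one hR1
  apply Filter.limsup_le_of_le (by isBoundedDefault)
  have hmem : Set.Ioo (0:ℝ) (min (Real.exp (-R)) 2⁻¹) ∈ nhdsWithin (0:ℝ) (Set.Ioi 0) :=
    Ioo_mem_nhdsGT_of_mem ⟨le_refl 0, by positivity⟩
  filter_upwards [hmem] with ε hε
  obtain ⟨hε0, hεlt⟩ := hε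
  have hε1 : ε < 1 :=
    lt_of_lt_of_le hεlt (le_trans (min_le_right _ _) (by norm_num))
  have hεexp : ε < Real.exp (-R) := lt_of_lt_of_le hεlt (min_le_left _ _)
  have hlogε : Real.log ε < -R := by
    calc Real.log ε < Real.log (Real.exp (-R)) := Real.log_lt_log hε0 hεexp
      _ = -R := Real.log_exp _
  have hlogεneg : Real.log ε < 0 := by linarith
  have habs : |Real.log ε| = -Real.log ε := abs_of_neg hlogεneg
  have hL : R ≤ |Real.log ε| := by rw [habs]; linarith
  have hL0 : (0:ℝ) < |Real.log ε| := lt_of_lt_of_le hR0 hL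
  have h1 := dynS_le hm hn hε0
  set M : ℕ := ⌊6 * Real.sqrt n / ε⌋₊ + 1 with hM
  have hMle : (M:ℝ) ≤ C / ε := by
    have h2 : ((⌊6 * Real.sqrt n / ε⌋₊ : ℕ):ℝ) ≤ 6 * Real.sqrt n / ε :=
      Nat.floor_le (by positivity)
    have h3 : (1:ℝ) ≤ 1 / ε := by
      rw [le_div_iff₀ hε0]
      linarith
    rw [hM]
    push_cast
    calc ((⌊6 * Real.sqrt n / ε⌋₊ : ℕ):ℝ) + 1 ≤ 6 * Real.sqrt n / ε + 1 / ε := by linarith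
      _ = C / ε := by rw [hC]; field_simp
  have hMpos : (0:ℝ) < (M:ℝ) := by
    have : 0 < M := Nat.succ_pos _
    exact_mod_cast this
  have hlogM : Real.log ((M:ℕ):ℝ) ≤ Real.log C + |Real.log ε| := by
    calc Real.log ((M:ℕ):ℝ) ≤ Real.log (C / ε) := Real.log_le_log hMpos hMle
      _ = Real.log C - Real.log ε := Real.log_div (ne_of_gt hC0) (ne_of_gt hε0)
      _ = Real.log C + |Real.log ε| := by rw [habs]; ring
  set L : ℝ≥0∞ := ENNReal.ofReal |Real.log ε| with hLdef
  have hLne0 : L ≠ 0 := by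
    rw [hLdef]
    simp only [ne_eq, ENNReal.ofReal_eq_zero, not_le]
    exact hL0
  have hLtop : L ≠ ⊤ := ENNReal.ofReal_ne_top
  have hn0 : (0:ℝ) ≤ (n:ℝ) := Nat.cast_nonneg n
  calc dynS (fun x : SeqSp n => fun k => x (k + 1)) ε / L
      ≤ ENNReal.ofReal ((n:ℝ) * Real.log ((M:ℕ):ℝ)) / L := ENNReal.div_le_div_right h1 L
    _ ≤ ENNReal.ofReal ((n:ℝ) * Real.log C + (n:ℝ) * |Real.log ε|) / L := by
        apply ENNReal.div_le_div_right
        apply ENNReal.ofReal_le_ofReal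
        nlinarith [hlogM]
    _ = (ENNReal.ofReal ((n:ℝ) * Real.log C) + ENNReal.ofReal ((n:ℝ) * |Real.log ε|)) / L := by
        rw [ENNReal.ofReal_add (by positivity) (by positivity)]
    _ = ENNReal.ofReal ((n:ℝ) * Real.log C) / L + ENNReal.ofReal ((n:ℝ) * |Real.log ε|) / L :=
        ENNReal.add_div
    _ ≤ (η:ℝ≥0∞) + (n:ℝ≥0∞) := by
        apply add_le_add
        · calc ENNReal.ofReal ((n:ℝ) * Real.log C) / L
              ≤ ENNReal.ofReal ((n:ℝ) * Real.log C) / ENNReal.ofReal R := by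
                apply ENNReal.div_le_div_left
                exact ENNReal.ofReal_le_ofReal hL
            _ = ENNReal.ofReal (((n:ℝ) * Real.log C) / R) := (ENNReal.ofReal_div_of_pos hR0).symm
            _ ≤ (η:ℝ≥0∞) := by
                rw [← ENNReal.ofReal_coe_nnreal]
                apply ENNReal.ofReal_le_ofReal
                rw [div_le_iff₀ hR0]
                have hmuldiv : (η:ℝ) * (((n:ℝ) * Real.log C) / (η:ℝ)) = (n:ℝ) * Real.log C := by
                  field_simp
                rw [hR, mul_add, mul_one, hmuldiv]
                linarith
        · have heq : ENNReal.ofReal ((n:ℝ) * |Real.log ε|) = (n:ℝ≥0∞) * L := by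
            rw [ENNReal.ofReal_mul hn0, ENNReal.ofReal_natCast, hLdef]
          rw [heq, mul_div_assoc, ENNReal.div_self hLne0 hLtop, mul_one]
    _ = (n:ℝ≥0∞) + (η:ℝ≥0∞) := add_comm _ _

lemma mdim_ge (hn : 1 ≤ n) :
    (n : ℝ≥0∞) ≤ mdim (fun x : SeqSp n => fun k => x (k + 1)) := by
  apply le_of_forall_lt
  intro b hb
  have hbtop : b ≠ ⊤ := hb.ne_top
  have hbr : b.toReal < (n:ℝ) := by
    have := (ENNReal.toReal_lt_toReal hbtop (ENNReal.natCast_ne_top n)).mpr hb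
    simpa using this
  set c : ℝ := (b.toReal + n) / 2 with hcdef
  have hbtr : 0 ≤ b.toReal := ENNReal.toReal_nonneg
  have hc0 : 0 ≤ c := by rw [hcdef]; positivity
  have hcn : c < (n:ℝ) := by rw [hcdef]; linarith
  have hcb : b < ENNReal.ofReal c :=
    (ENNReal.lt_ofReal_iff_toReal_lt hbtop).mpr (by rw [hcdef]; linarith)
  suffices hle : ENNReal.ofReal c ≤ mdim (fun x : SeqSp n => fun k => x (k + 1)) from
    lt_of_lt_of_le hcb hle
  rw [mdim]
  apply Filter.le_limsup_of_frequently_le'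
  apply Filter.Eventually.frequently
  have hnc : (0:ℝ) < (n:ℝ) - c := by linarith
  have hlog2 : (0:ℝ) < Real.log 2 := Real.log_pos (by norm_num)
  set R : ℝ := ((n:ℝ) * Real.log 2) / ((n:ℝ) - c) + 1 with hR
  have hRnn : 0 ≤ ((n:ℝ) * Real.log 2) / ((n:ℝ) - c) := by positivity
  have hR1 : (1:ℝ) ≤ R := by rw [hR]; linarith
  have hR0 : (0:ℝ) < R := lt_of_lt_of_le zero_lt_one hR1
  have hmem : Set.Ioo (0:ℝ) (min (Real.exp (-R)) 2⁻¹) ∈ nhdsWithin (0:ℝ) (Set.Ioi 0) :=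
    Ioo_mem_nhdsGT_of_mem ⟨le_refl 0, by positivity⟩
  filter_upwards [hmem] with ε hε
  obtain ⟨hε0, hεlt⟩ := hε
  have hε1 : ε < 1 :=
    lt_of_lt_of_le hεlt (le_trans (min_le_right _ _) (by norm_num))
  have hεexp : ε < Real.exp (-R) := lt_of_lt_of_le hεlt (min_le_left _ _)
  have hlogε : Real.log ε < -R := by
    calc Real.log ε < Real.log (Real.exp (-R)) := Real.log_lt_log hε0 hεexp
      _ = -R := Real.log_exp _
  have hlogεneg : Real.log ε < 0 := by linarith
  have habs : |Real.log ε| = -Real.log ε := abs_of_neg hlogεneg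
  have hL : R ≤ |Real.log ε| := by rw [habs]; linarith
  have hL0 : (0:ℝ) < |Real.log ε| := lt_of_lt_of_le hR0 hL
  have h1 := dynS_ge hm hn hε0
  set M₁ : ℕ := ⌊1 / (2 * ε)⌋₊ + 1 with hM1def
  have hM₁ : 1 / (2 * ε) < ((M₁:ℕ):ℝ) := by
    rw [hM1def]
    push_cast
    exact Nat.lt_floor_add_one _
  have hpos : (0:ℝ) < 1 / (2 * ε) := by positivity
  have hlogM₁ : |Real.log ε| - Real.log 2 ≤ Real.log ((M₁:ℕ):ℝ) := by
    have hinv : Real.log (1 / (2 * ε)) = -(Real.log 2 + Real.log ε) := by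
      rw [one_div, Real.log_inv, Real.log_mul two_ne_zero (ne_of_gt hε0)]
    calc |Real.log ε| - Real.log 2 = Real.log (1 / (2 * ε)) := by rw [hinv, habs]; ring
      _ ≤ Real.log ((M₁:ℕ):ℝ) := Real.log_le_log hpos hM₁.le
  have hkey : c * |Real.log ε| ≤ (n:ℝ) * Real.log ((M₁:ℕ):ℝ) := by
    have h5 : (n:ℝ) * Real.log 2 ≤ ((n:ℝ) - c) * |Real.log ε| := by
      have heq : ((n:ℝ) - c) * R = (n:ℝ) * Real.log 2 + ((n:ℝ) - c) := by
        rw [hR]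
        field_simp
      nlinarith [mul_le_mul_of_nonneg_left hL hnc.le]
    have h6 : (n:ℝ) * (|Real.log ε| - Real.log 2) ≤ (n:ℝ) * Real.log ((M₁:ℕ):ℝ) :=
      mul_le_mul_of_nonneg_left hlogM₁ (Nat.cast_nonneg n)
    nlinarith
  calc ENNReal.ofReal c
      ≤ ENNReal.ofReal (((n:ℝ) * Real.log ((M₁:ℕ):ℝ)) / |Real.log ε|) := by
        apply ENNReal.ofReal_le_ofReal
        rw [le_div_iff₀ hL0]
        exact hkey
    _ = ENNReal.ofReal ((n:ℝ) * Real.log ((M₁:ℕ):ℝ)) / ENNReal.ofReal |Real.log ε| :=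
        ENNReal.ofReal_div_of_pos hL0
    _ ≤ dynS (fun x : SeqSp n => fun k => x (k + 1)) ε / ENNReal.ofReal |Real.log ε| :=
        ENNReal.div_le_div_right h1 _

end Counting

end ShiftMdimAux
/-- The upper metric mean dimension of the shift on `([0,1]^n)^ℤ`, for the metric
`d_T(x,y) = ∑_{k ∈ ℤ} 2^{-|k|} d(x_k, y_k)` with `d` the Euclidean metric on `[0,1]^n`,
equals `n`. -/
theorem mdim_shift_unitCube
    (n : ℕ) (hn : 1 ≤ n)
    [m : MetricSpace (ℤ → (Fin n → (Set.Icc (0:ℝ) 1)))]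
    (hm : ∀ x y : ℤ → (Fin n → (Set.Icc (0:ℝ) 1)),
      dist x y = ∑' k : ℤ, (2:ℝ) ^ (-|k|) *
        Real.sqrt (∑ i : Fin n, ((x k i : ℝ) - (y k i : ℝ)) ^ 2)) :
    mdim (fun x : ℤ → (Fin n → (Set.Icc (0:ℝ) 1)) => fun k => x (k + 1)) = n := by
  exact le_antisymm (ShiftMdimAux.mdim_le hm hn) (ShiftMdimAux.mdim_ge hm hn)
end

section
/- Let (Y,d) be a compact metric space, let T be the shift map on Y^ℤ, and let d_T(x,y)=∑_{k∈ℤ} 2^{−|k|} d(x_k,y_k). Then the upper metric mean dimension of the shift equals the upper box dimension of Y: mdim(Y^ℤ, d_T, T) = dim_B(Y,d). -/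
open Filter Set Metric Function
open scoped ENNReal NNReal

noncomputable section
namespace MdimShiftAux
universe u_aux
section AuxGeneral
variable {X : Type u_aux} [MetricSpace X]

lemma lt_dynDist_iff (T : X → X) (n : ℕ) (x y : X) {ε : ℝ} (hε : 0 ≤ ε) :
    ε < dynDist T n x y ↔ ∃ k < n, ε < dist (T^[k] x) (T^[k] y) := by
  rw [dynDist, ← Real.toNNReal_lt_iff_lt_coe hε, Finset.lt_sup_iff]
  simp only [Finset.mem_range, Real.toNNReal_lt_iff_lt_coe hε, coe_nndist]

lemma dynDist_le_iff (T : X → X) (n : ℕ) (x y : X) {ε : ℝ} (hε : 0 ≤ ε) :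
    dynDist T n x y ≤ ε ↔ ∀ k < n, dist (T^[k] x) (T^[k] y) ≤ ε := by
  rw [dynDist, ← Real.le_toNNReal_iff_coe_le hε, Finset.sup_le_iff]
  simp only [Finset.mem_range, Real.le_toNNReal_iff_coe_le hε, coe_nndist]

/-- cardinalities of separated sets in a compact space are bounded. -/
lemma sep_bddAbove [CompactSpace X] {ε : ℝ} (hε : 0 < ε) :
    BddAbove {m | ∃ E : Finset X, (∀ x ∈ E, ∀ y ∈ E, x ≠ y → ε < dist x y) ∧ E.card = m} := by
  obtain ⟨t, -, htfin, htcov⟩ := (isCompact_univ (X := X)).finite_cover_balls (e := ε / 2) (by linarith)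
  have hchoice : ∀ z : X, ∃ w : X, w ∈ t ∧ dist z w < ε / 2 := by
    intro z
    have := htcov (mem_univ z)
    simp only [mem_iUnion, Metric.mem_ball] at this
    obtain ⟨w, hw, hd⟩ := this
    exact ⟨w, hw, hd⟩
  choose f hf1 hf2 using hchoice
  refine ⟨htfin.toFinset.card, ?_⟩
  rintro m ⟨E, hsep, rfl⟩
  refine Finset.card_le_card_of_injOn f (fun a _ => htfin.mem_toFinset.mpr (hf1 a)) ?_
  intro a ha b hb hab
  by_contra hne
  have h1 : ε < dist a b := hsep a ha b hb hne
  have h2 : dist a b ≤ dist a (f a) + dist (f b) b := by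
    calc dist a b ≤ dist a (f a) + dist (f a) b := dist_triangle _ _ _
    _ = dist a (f a) + dist (f b) b := by rw [hab, dist_comm]
  have := hf2 a; have := hf2 b
  rw [dist_comm (f b) b] at h2
  linarith

lemma sepNum_set_nonempty :
    {m | ∃ E : Finset X, (∀ x ∈ E, ∀ y ∈ E, x ≠ y → ε < dist x y) ∧ E.card = m}.Nonempty :=
  ⟨0, ∅, by simp, rfl⟩

lemma exists_maximal_sep [CompactSpace X] [Nonempty X] {ε : ℝ} (hε : 0 < ε) :
    ∃ E : Finset X, (∀ x ∈ E, ∀ y ∈ E, x ≠ y → ε < dist x y) ∧ E.card = sepNum X ε ∧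
      ∀ z : X, ∃ e ∈ E, dist z e ≤ ε := by
  classical
  have hb := sep_bddAbove (X := X) hε
  have hmem := Nat.sSup_mem (sepNum_set_nonempty (X := X) (ε := ε)) hb
  obtain ⟨E, hsep, hcard⟩ := hmem
  refine ⟨E, hsep, hcard, ?_⟩
  intro z
  by_contra hcon
  push_neg at hcon
  have hz : z ∉ E := fun hz => by have := hcon z hz; simp at this; linarith
  have hsep' : ∀ x ∈ insert z E, ∀ y ∈ insert z E, x ≠ y → ε < dist x y := by
    intro x hx y hy hxy
    rcases Finset.mem_insert.mp hx with h1 | h1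
    · rcases Finset.mem_insert.mp hy with h2 | h2
      · exact absurd (h1.trans h2.symm) hxy
      · rw [h1]; exact hcon y h2
    · rcases Finset.mem_insert.mp hy with h2 | h2
      · rw [h2, dist_comm]; exact hcon x h1
      · exact hsep x h1 y h2 hxy
  have : (insert z E).card ≤ sSup {m | ∃ E : Finset X, (∀ x ∈ E, ∀ y ∈ E, x ≠ y → ε < dist x y) ∧ E.card = m} :=
    le_csSup hb ⟨insert z E, hsep', rfl⟩
  rw [Finset.card_insert_of_notMem hz, hcard] at this
  have h2 : sepNum X ε + 1 ≤ sepNum X ε := this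
  omega

lemma one_le_sepNum [CompactSpace X] [Nonempty X] {ε : ℝ} (hε : 0 < ε) :
    1 ≤ sepNum X ε := by
  have hb := sep_bddAbove (X := X) hε
  have : 1 ∈ {m | ∃ E : Finset X, (∀ x ∈ E, ∀ y ∈ E, x ≠ y → ε < dist x y) ∧ E.card = m} := by
    refine ⟨{Classical.arbitrary X}, ?_, Finset.card_singleton _⟩
    intro x hx y hy hxy
    simp only [Finset.mem_singleton] at hx hy
    exact absurd (hx.trans hy.symm) hxy
  exact le_csSup hb this

lemma log_nat_mono {a b : ℕ} (h : a ≤ b) : Real.log a ≤ Real.log b := by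
  rcases Nat.eq_zero_or_pos a with rfl | ha
  · simp only [Nat.cast_zero, Real.log_zero]
    rcases Nat.eq_zero_or_pos b with rfl | hb
    · simp
    · exact Real.log_nonneg (by exact_mod_cast hb)
  · exact Real.log_le_log (by exact_mod_cast ha) (by exact_mod_cast h)

end AuxGeneral

lemma limsup_const_mul_le' {α : Type*} (f : Filter α) (u : α → ℝ≥0∞) (c : ℝ≥0∞) (hc : c ≠ ⊤) :
    Filter.limsup (fun x => c * u x) f ≤ c * Filter.limsup u f := by
  have hne : {a | ∀ᶠ x in f, u x ≤ a}.Nonempty := ⟨⊤, Filter.Eventually.of_forall fun _ => le_top⟩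
  have : Nonempty {a // a ∈ {a | ∀ᶠ x in f, u x ≤ a}} := hne.to_subtype
  calc Filter.limsup (fun x => c * u x) f
      ≤ ⨅ a : {a | ∀ᶠ x in f, u x ≤ a}, c * (a : ℝ≥0∞) := by
        refine le_iInf fun a => ?_
        rw [Filter.limsup_eq]
        exact sInf_le (a.2.mono fun x hx => mul_le_mul' le_rfl hx)
    _ = c * ⨅ a : {a | ∀ᶠ x in f, u x ≤ a}, (a : ℝ≥0∞) :=
        (ENNReal.mul_iInf (fun h => absurd h hc)).symm
    _ = c * Filter.limsup u f := by rw [Filter.limsup_eq, sInf_eq_iInf']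

section Shift
variable {Y : Type u_aux} [MetricSpace Y]

lemma shift_iter (j : ℕ) (x : ℤ → Y) :
    (fun x : ℤ → Y => fun k => x (k + 1))^[j] x = fun k => x (k + j) := by
  induction j generalizing x with
  | zero => simp
  | succ j ih =>
    rw [Function.iterate_succ_apply, ih]
    funext k
    exact congrArg x (by push_cast; ring)

variable [CompactSpace Y]

lemma summable_base : Summable (fun k : ℤ => (2:ℝ) ^ (-|k|)) := by
  apply Summable.of_nat_of_neg <;>
  · simp only [abs_neg, Int.abs_natCast]
    have : (fun n : ℕ => (2:ℝ) ^ (-(n:ℤ))) = fun n : ℕ => (2⁻¹ : ℝ) ^ n := by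
      funext n; rw [zpow_neg, ← zpow_natCast, inv_zpow]
    rw [this]
    exact summable_geometric_of_lt_one (by norm_num) (by norm_num)

variable [MetricSpace (ℤ → Y)]

lemma summable_dist (x y : ℤ → Y) :
    Summable (fun k : ℤ => (2:ℝ) ^ (-|k|) * dist (x k) (y k)) := by
  refine Summable.of_nonneg_of_le (fun k => by positivity) (fun k => ?_)
    (summable_base.mul_right (Metric.diam (univ : Set Y)))
  exact mul_le_mul_of_nonneg_left
    (Metric.dist_le_diam_of_mem (isCompact_univ.isBounded) (mem_univ _) (mem_univ _))
    (by positivity)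

end Shift

/-- The total weight `K = ∑_{k ∈ ℤ} 2^{-|k|}`. -/
def twoK : ℝ := ∑' k : ℤ, (2:ℝ) ^ (-|k|)

lemma one_le_twoK : 1 ≤ twoK := by
  have h := Summable.le_tsum summable_base 0 (fun j _ => by positivity)
  rw [twoK]
  simpa only [abs_zero, neg_zero, zpow_zero] using h

lemma twoK_pos : 0 < twoK := lt_of_lt_of_le one_pos one_le_twoK

section Main
variable {Y : Type u_aux} [MetricSpace Y] [CompactSpace Y] [m : MetricSpace (ℤ → Y)]

lemma dist_coord_le (hm : ∀ x y : ℤ → Y, dist x y = ∑' k : ℤ, (2:ℝ) ^ (-|k|) * dist (x k) (y k))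
    (x y : ℤ → Y) : dist (x 0) (y 0) ≤ dist x y := by
  rw [hm]
  have := Summable.le_tsum (summable_dist x y) 0 (fun j _ => by positivity)
  simpa using this

lemma dist_window_le (hm : ∀ x y : ℤ → Y, dist x y = ∑' k : ℤ, (2:ℝ) ^ (-|k|) * dist (x k) (y k))
    (x y : ℤ → Y) (s : Finset ℤ) :
    dist x y ≤ (∑ j ∈ s, (2:ℝ) ^ (-|j|) * dist (x j) (y j))
      + (∑' j : {k : ℤ // k ∉ s}, (2:ℝ) ^ (-|(j:ℤ)|)) * Metric.diam (univ : Set Y) := by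
  rw [hm, ← Summable.sum_add_tsum_compl (s := s) (summable_dist x y)]
  refine add_le_add_right ?_ _
  rw [← tsum_mul_right]
  refine Summable.tsum_le_tsum (fun j => ?_) ((summable_dist x y).subtype _)
    ((summable_base.mul_right _).subtype _)
  exact mul_le_mul_of_nonneg_left
    (Metric.dist_le_diam_of_mem (isCompact_univ.isBounded) (mem_univ _) (mem_univ _))
    (by positivity)

lemma exists_window (hm : ∀ x y : ℤ → Y, dist x y = ∑' k : ℤ, (2:ℝ) ^ (-|k|) * dist (x k) (y k))
    {ε : ℝ} (hε : 0 < ε) :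
    ∃ M : ℕ, ∀ x y : ℤ → Y,
      dist x y ≤ (∑ j ∈ Finset.Icc (-(M:ℤ)) (M:ℤ), (2:ℝ) ^ (-|j|) * dist (x j) (y j)) + ε := by
  set D := Metric.diam (univ : Set Y) with hDdef
  have hD : 0 ≤ D := Metric.diam_nonneg
  have ht := tendsto_tsum_compl_atTop_zero (fun k : ℤ => (2:ℝ) ^ (-|k|))
  have hev := ht.eventually_lt_const (show (0:ℝ) < ε / (D + 1) by positivity)
  rw [eventually_atTop] at hev
  obtain ⟨s₀, hs₀⟩ := hev
  set M := s₀.sup (fun j => j.natAbs) with hMdef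
  refine ⟨M, fun x y => ?_⟩
  have hsub : s₀ ≤ Finset.Icc (-(M:ℤ)) (M:ℤ) := by
    intro j hj
    have : j.natAbs ≤ M := Finset.le_sup (f := fun j : ℤ => j.natAbs) hj
    rw [Finset.mem_Icc]
    omega
  have htail := hs₀ _ hsub
  have htail0 : 0 ≤ ∑' j : {k : ℤ // k ∉ Finset.Icc (-(M:ℤ)) (M:ℤ)}, (2:ℝ) ^ (-|(j:ℤ)|) :=
    tsum_nonneg (fun j => by positivity)
  refine le_trans (dist_window_le hm x y _) (add_le_add_right ?_ _)
  have h1 : (∑' j : {k : ℤ // k ∉ Finset.Icc (-(M:ℤ)) (M:ℤ)}, (2:ℝ) ^ (-|(j:ℤ)|)) * D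
      ≤ (ε / (D + 1)) * D := mul_le_mul_of_nonneg_right htail.le hD
  have h2 : (ε / (D + 1)) * D ≤ ε := by
    rw [div_mul_eq_mul_div, div_le_iff₀ (by positivity)]
    nlinarith
  linarith

lemma dyn_card_le [Nonempty Y]
    (hm : ∀ x y : ℤ → Y, dist x y = ∑' k : ℤ, (2:ℝ) ^ (-|k|) * dist (x k) (y k))
    {ε : ℝ} (hε : 0 < ε) :
    ∃ M : ℕ, ∀ n : ℕ, ∀ E : Finset (ℤ → Y),
      (∀ x ∈ E, ∀ y ∈ E, x ≠ y → ε < dynDist (fun x : ℤ → Y => fun k => x (k + 1)) n x y) →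
      E.card ≤ (sepNum Y (ε / (8 * twoK))) ^ (2 * M + n + 1) := by
  classical
  set r : ℝ := ε / (8 * twoK) with hrdef
  have hK := twoK_pos
  have hK1 := one_le_twoK
  have hr : 0 < r := by rw [hrdef]; positivity
  obtain ⟨E₀, hE₀sep, hE₀card, hE₀net⟩ := exists_maximal_sep (X := Y) hr
  choose e he₁ he₂ using hE₀net
  obtain ⟨M, hM⟩ := exists_window hm (show 0 < ε/2 by linarith)
  refine ⟨M, fun n E hsep => ?_⟩
  set W : Finset ℤ := Finset.Icc (-(M:ℤ)) ((M:ℤ) + n) with hWdef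
  have hΦmem : ∀ x ∈ E, (fun j : {a // a ∈ W} => e (x (j:ℤ)))
      ∈ Fintype.piFinset (fun _ : {a // a ∈ W} => E₀) := by
    intro x _
    rw [Fintype.mem_piFinset]
    intro j
    exact he₁ _
  have hinj : Set.InjOn (fun x : ℤ → Y => (fun j : {a // a ∈ W} => e (x (j:ℤ)))) E := by
    intro x hx y hy heq
    by_contra hne
    have hd := hsep x hx y hy hne
    rw [lt_dynDist_iff _ _ _ _ hε.le] at hd
    obtain ⟨k, hk, hdk⟩ := hd
    rw [shift_iter, shift_iter] at hdk
    set xk : ℤ → Y := fun j => x (j + (k:ℤ)) with hxkdef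
    set yk : ℤ → Y := fun j => y (j + (k:ℤ)) with hykdef
    have hwin := hM xk yk
    have hcoord : ∀ j ∈ Finset.Icc (-(M:ℤ)) (M:ℤ), dist (xk j) (yk j) ≤ 2 * r := by
      intro j hj
      rw [Finset.mem_Icc] at hj
      have hmem : (j + (k:ℤ)) ∈ W := by rw [hWdef, Finset.mem_Icc]; omega
      have heqj : e (x (j + (k:ℤ))) = e (y (j + (k:ℤ))) := congrFun heq ⟨j + (k:ℤ), hmem⟩
      calc dist (xk j) (yk j)
          ≤ dist (x (j + (k:ℤ))) (e (x (j + (k:ℤ)))) + dist (e (x (j + (k:ℤ)))) (y (j + (k:ℤ))) :=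
            dist_triangle _ _ _
        _ = dist (x (j + (k:ℤ))) (e (x (j + (k:ℤ)))) + dist (y (j + (k:ℤ))) (e (y (j + (k:ℤ)))) := by
            rw [heqj, dist_comm (e (y (j + (k:ℤ)))) (y (j + (k:ℤ)))]
        _ ≤ r + r := add_le_add (he₂ _) (he₂ _)
        _ = 2 * r := by ring
    have hsum : (∑ j ∈ Finset.Icc (-(M:ℤ)) (M:ℤ), (2:ℝ) ^ (-|j|) * dist (xk j) (yk j))
        ≤ twoK * (2 * r) := by
      calc (∑ j ∈ Finset.Icc (-(M:ℤ)) (M:ℤ), (2:ℝ) ^ (-|j|) * dist (xk j) (yk j))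
          ≤ ∑ j ∈ Finset.Icc (-(M:ℤ)) (M:ℤ), (2:ℝ) ^ (-|j|) * (2 * r) :=
            Finset.sum_le_sum (fun j hj => mul_le_mul_of_nonneg_left (hcoord j hj) (by positivity))
        _ = (∑ j ∈ Finset.Icc (-(M:ℤ)) (M:ℤ), (2:ℝ) ^ (-|j|)) * (2 * r) := by
            rw [Finset.sum_mul]
        _ ≤ twoK * (2 * r) := by
            refine mul_le_mul_of_nonneg_right ?_ (by positivity)
            exact Summable.sum_le_tsum _ (fun j _ => by positivity) summable_base
    have hKr : twoK * (2 * r) = ε / 4 := by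
      rw [hrdef]
      field_simp
      ring
    have hlt : dist xk yk ≤ ε / 4 + ε / 2 := by
      rw [← hKr]
      linarith
    have : ε < dist xk yk := hdk
    linarith
  calc E.card ≤ (Fintype.piFinset (fun _ : {a // a ∈ W} => E₀)).card :=
      Finset.card_le_card_of_injOn _ hΦmem hinj
    _ = E₀.card ^ (Fintype.card {a // a ∈ W}) := by
        rw [Fintype.card_piFinset, Finset.prod_const, Finset.card_univ]
    _ = (sepNum Y r) ^ (2 * M + n + 1) := by
        rw [hE₀card]
        congr 1
        rw [Fintype.card_coe, hWdef, Int.card_Icc]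
        omega

lemma dyn_bddAbove [Nonempty Y]
    (hm : ∀ x y : ℤ → Y, dist x y = ∑' k : ℤ, (2:ℝ) ^ (-|k|) * dist (x k) (y k))
    {ε : ℝ} (hε : 0 < ε) (n : ℕ) :
    BddAbove {m' | ∃ E : Finset (ℤ → Y),
      (∀ x ∈ E, ∀ y ∈ E, x ≠ y → ε < dynDist (fun x : ℤ → Y => fun k => x (k + 1)) n x y) ∧
      E.card = m'} := by
  obtain ⟨M, hM⟩ := dyn_card_le hm hε
  refine ⟨(sepNum Y (ε / (8 * twoK))) ^ (2 * M + n + 1), ?_⟩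
  rintro m' ⟨E, hsep, rfl⟩
  exact hM n E hsep

lemma dynSepNum_le [Nonempty Y]
    (hm : ∀ x y : ℤ → Y, dist x y = ∑' k : ℤ, (2:ℝ) ^ (-|k|) * dist (x k) (y k))
    {ε : ℝ} (hε : 0 < ε) :
    ∃ M : ℕ, ∀ n : ℕ,
      dynSepNum (fun x : ℤ → Y => fun k => x (k + 1)) n ε
        ≤ (sepNum Y (ε / (8 * twoK))) ^ (2 * M + n + 1) := by
  obtain ⟨M, hM⟩ := dyn_card_le hm hε
  refine ⟨M, fun n => ?_⟩
  refine csSup_le ⟨0, ∅, by simp, rfl⟩ ?_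
  rintro m' ⟨E, hsep, rfl⟩
  exact hM n E hsep

lemma dyn_sep_ge [Nonempty Y]
    (hm : ∀ x y : ℤ → Y, dist x y = ∑' k : ℤ, (2:ℝ) ^ (-|k|) * dist (x k) (y k))
    {ε : ℝ} (hε : 0 < ε) (n : ℕ) :
    (sepNum Y ε) ^ n ≤ dynSepNum (fun x : ℤ → Y => fun k => x (k + 1)) n ε := by
  classical
  obtain ⟨E₀, hE₀sep, hE₀card, -⟩ := exists_maximal_sep (X := Y) hε
  set y₀ : Y := Classical.arbitrary Y with hy₀
  set ψ : (Fin n → Y) → (ℤ → Y) :=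
    fun w k => if h : 0 ≤ k ∧ k < n then w ⟨k.toNat, by omega⟩ else y₀ with hψdef
  have hψeval : ∀ (w : Fin n → Y) (i : Fin n), ψ w (i : ℤ) = w i := by
    intro w i
    have h : (0:ℤ) ≤ (i:ℤ) ∧ (i:ℤ) < n := ⟨Int.natCast_nonneg _, by exact_mod_cast i.isLt⟩
    rw [hψdef]
    simp only [h, and_self, dif_pos]
    exact congrArg w (Fin.ext (Int.toNat_natCast i))
  have hψinj : Function.Injective ψ := by
    intro w w' h
    funext i
    rw [← hψeval w i, ← hψeval w' i, h]
  set E : Finset (ℤ → Y) := (Fintype.piFinset fun _ : Fin n => E₀).image ψ with hEdef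
  have hcard : E.card = (sepNum Y ε) ^ n := by
    rw [hEdef, Finset.card_image_of_injective _ hψinj, Fintype.card_piFinset,
      Finset.prod_const, Finset.card_univ, Fintype.card_fin, hE₀card]
  have hsep : ∀ x ∈ E, ∀ y ∈ E, x ≠ y →
      ε < dynDist (fun x : ℤ → Y => fun k => x (k + 1)) n x y := by
    intro x hx y hy hxy
    rw [hEdef, Finset.mem_image] at hx hy
    obtain ⟨w, hw, rfl⟩ := hx
    obtain ⟨w', hw', rfl⟩ := hy
    rw [Fintype.mem_piFinset] at hw hw'
    have hww : w ≠ w' := fun h => hxy (by rw [h])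
    obtain ⟨i, hi⟩ : ∃ i, w i ≠ w' i := by
      by_contra hcc
      push_neg at hcc
      exact hww (funext hcc)
    rw [lt_dynDist_iff _ _ _ _ hε.le]
    refine ⟨i, i.isLt, ?_⟩
    rw [shift_iter, shift_iter]
    have hcle := dist_coord_le hm (fun k => ψ w (k + (i:ℤ))) (fun k => ψ w' (k + (i:ℤ)))
    refine lt_of_lt_of_le ?_ hcle
    simp only [zero_add]
    rw [hψeval, hψeval]
    exact hE₀sep _ (hw i) _ (hw' i) hi
  refine le_csSup (dyn_bddAbove hm hε n) ?_
  exact ⟨E, hsep, hcard⟩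

lemma log_nat_nonneg (b : ℕ) : 0 ≤ Real.log b := by
  simpa using log_nat_mono (Nat.zero_le b)

lemma dynS_ge [Nonempty Y]
    (hm : ∀ x y : ℤ → Y, dist x y = ∑' k : ℤ, (2:ℝ) ^ (-|k|) * dist (x k) (y k))
    {ε : ℝ} (hε : 0 < ε) :
    ENNReal.ofReal (Real.log (sepNum Y ε))
      ≤ dynS (fun x : ℤ → Y => fun k => x (k + 1)) ε := by
  rw [dynS]
  refine Filter.le_limsup_of_frequently_le (eventually_atTop.mpr ⟨1, fun n hn => ?_⟩).frequently (by isBoundedDefault)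
  have hn0 : (n : ℝ≥0∞) ≠ 0 := by exact_mod_cast Nat.one_le_iff_ne_zero.mp hn
  rw [ENNReal.le_div_iff_mul_le (Or.inl hn0) (Or.inl (ENNReal.natCast_ne_top n))]
  have hsep := dyn_sep_ge hm hε n
  have hlog : Real.log (sepNum Y ε) * n
      ≤ Real.log (dynSepNum (fun x : ℤ → Y => fun k => x (k + 1)) n ε) := by
    have h1 : Real.log ((sepNum Y ε : ℕ) ^ n : ℕ)
        ≤ Real.log (dynSepNum (fun x : ℤ → Y => fun k => x (k + 1)) n ε) :=
      log_nat_mono hsep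
    rw [Nat.cast_pow, Real.log_pow] at h1
    linarith [h1]
  calc ENNReal.ofReal (Real.log (sepNum Y ε)) * n
      = ENNReal.ofReal (Real.log (sepNum Y ε) * n) := by
        rw [ENNReal.ofReal_mul' (Nat.cast_nonneg n), ENNReal.ofReal_natCast]
    _ ≤ _ := ENNReal.ofReal_le_ofReal hlog

lemma dynS_le [Nonempty Y]
    (hm : ∀ x y : ℤ → Y, dist x y = ∑' k : ℤ, (2:ℝ) ^ (-|k|) * dist (x k) (y k))
    {ε η : ℝ} (hε : 0 < ε) (hη : 0 < η) :
    dynS (fun x : ℤ → Y => fun k => x (k + 1)) ε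
      ≤ ENNReal.ofReal ((1 + η) * Real.log (sepNum Y (ε / (8 * twoK)))) := by
  obtain ⟨M, hM⟩ := dynSepNum_le hm hε
  set c := sepNum Y (ε / (8 * twoK)) with hcdef
  have hcnn : 0 ≤ Real.log c := log_nat_nonneg c
  rw [dynS]
  refine Filter.limsup_le_of_le (by isBoundedDefault)
    (eventually_atTop.mpr ⟨⌈(2 * M + 1 : ℝ) / η⌉₊ + 1, fun n hn => ?_⟩)
  have hn1 : 1 ≤ n := le_trans (Nat.le_add_left 1 _) hn
  have hn0 : (n : ℝ≥0∞) ≠ 0 := by exact_mod_cast Nat.one_le_iff_ne_zero.mp hn1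
  have hnn : (2 * M + 1 : ℝ) ≤ η * n := by
    have h1 : ((2 * M + 1 : ℝ) / η) ≤ (⌈(2 * M + 1 : ℝ) / η⌉₊ : ℝ) := Nat.le_ceil _
    have h2 : ((⌈(2 * M + 1 : ℝ) / η⌉₊ : ℝ) + 1) ≤ (n : ℝ) := by exact_mod_cast hn
    rw [div_le_iff₀ hη] at h1
    nlinarith
  have hlog : Real.log (dynSepNum (fun x : ℤ → Y => fun k => x (k + 1)) n ε)
      ≤ (n : ℝ) * ((1 + η) * Real.log c) := by
    have h1 : Real.log (dynSepNum (fun x : ℤ → Y => fun k => x (k + 1)) n ε)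
        ≤ Real.log ((c ^ (2 * M + n + 1) : ℕ)) := log_nat_mono (hM n)
    rw [Nat.cast_pow, Real.log_pow] at h1
    have h2 : ((2 * M + n + 1 : ℕ) : ℝ) * Real.log c ≤ ((1 + η) * n) * Real.log c := by
      refine mul_le_mul_of_nonneg_right ?_ hcnn
      push_cast
      nlinarith
    calc Real.log (dynSepNum (fun x : ℤ → Y => fun k => x (k + 1)) n ε)
        ≤ ((2 * M + n + 1 : ℕ) : ℝ) * Real.log c := h1
      _ ≤ ((1 + η) * n) * Real.log c := h2
      _ = (n : ℝ) * ((1 + η) * Real.log c) := by ring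
  calc ENNReal.ofReal (Real.log (dynSepNum (fun x : ℤ → Y => fun k => x (k + 1)) n ε)) / n
      ≤ ENNReal.ofReal ((n : ℝ) * ((1 + η) * Real.log c)) / n :=
        ENNReal.div_le_div_right (ENNReal.ofReal_le_ofReal hlog) _
    _ = (n : ℝ≥0∞) * ENNReal.ofReal ((1 + η) * Real.log c) / n := by
        rw [ENNReal.ofReal_mul (Nat.cast_nonneg n), ENNReal.ofReal_natCast]
    _ = ENNReal.ofReal ((1 + η) * Real.log c) := by
        rw [mul_comm, mul_div_assoc, ENNReal.div_self hn0 (ENNReal.natCast_ne_top n), mul_one]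

end Main

lemma div_ofReal_le {a : ℝ≥0∞} {s t η : ℝ} (ht : 0 < t) (hη : 0 ≤ η) (hst : t ≤ (1 + η) * s) :
    a / ENNReal.ofReal s ≤ ENNReal.ofReal (1 + η) * (a / ENNReal.ofReal t) := by
  have hs : 0 < s := by nlinarith
  rw [div_eq_mul_inv, div_eq_mul_inv, ← mul_assoc, mul_comm (ENNReal.ofReal (1 + η)) a,
    mul_assoc]
  refine mul_le_mul' le_rfl ?_
  rw [← ENNReal.ofReal_inv_of_pos hs, ← ENNReal.ofReal_inv_of_pos ht,
    ← ENNReal.ofReal_mul (by linarith)]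
  apply ENNReal.ofReal_le_ofReal
  have h : (1:ℝ)/s ≤ (1+η)/t := by
    rw [div_le_div_iff₀ hs ht]
    linarith
  simpa [one_div, div_eq_mul_inv] using h

lemma sepNum_of_isEmpty {X : Type*} [MetricSpace X] [IsEmpty X] (ε : ℝ) : sepNum X ε = 0 := by
  have h : {m' | ∃ E : Finset X, (∀ x ∈ E, ∀ y ∈ E, x ≠ y → ε < dist x y) ∧ E.card = m'}
      = {0} := by
    ext m'
    simp only [Set.mem_setOf_eq, Set.mem_singleton_iff]
    constructor
    · rintro ⟨E, -, rfl⟩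
      rw [Finset.eq_empty_of_isEmpty E, Finset.card_empty]
    · rintro rfl
      exact ⟨∅, by simp, rfl⟩
  rw [sepNum, h, csSup_singleton]

lemma dynSepNum_of_isEmpty {X : Type u_aux} [MetricSpace X] [IsEmpty X] (T : X → X) (n : ℕ)
    (ε : ℝ) : dynSepNum T n ε = 0 := by
  have h : {m' | ∃ E : Finset X, (∀ x ∈ E, ∀ y ∈ E, x ≠ y → ε < dynDist T n x y) ∧ E.card = m'}
      = {0} := by
    ext m'
    simp only [Set.mem_setOf_eq, Set.mem_singleton_iff]
    constructor
    · rintro ⟨E, -, rfl⟩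
      rw [Finset.eq_empty_of_isEmpty E, Finset.card_empty]
    · rintro rfl
      exact ⟨∅, by simp, rfl⟩
  rw [dynSepNum, h, csSup_singleton]


end MdimShiftAux
end

/-- **Theorem 3.7**: for a compact metric space `(Y,d)`, the upper metric mean dimension of
the shift on `Y^ℤ` with the metric `d_T(x,y) = ∑_{k ∈ ℤ} 2^{-|k|} d(x_k, y_k)` equals the
upper box dimension of `(Y,d)`. -/
theorem mdim_shift_eq_upperBoxDim
    {Y : Type u} [MetricSpace Y] [CompactSpace Y]
    [m : MetricSpace (ℤ → Y)]
    (hm : ∀ x y : ℤ → Y, dist x y = ∑' k : ℤ, (2:ℝ) ^ (-|k|) * dist (x k) (y k)) :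
    mdim (fun x : ℤ → Y => fun k => x (k + 1)) = upperBoxDim Y := by
  open MdimShiftAux in
  rcases isEmpty_or_nonempty Y with hY | hY
  · haveI : IsEmpty (ℤ → Y) := ⟨fun x => IsEmpty.false (x 0)⟩
    have h1 : mdim (fun x : ℤ → Y => fun k => x (k + 1)) = 0 := by
      rw [mdim]
      have hfun : (fun ε : ℝ => dynS (fun x : ℤ → Y => fun k => x (k + 1)) ε
          / ENNReal.ofReal |Real.log ε|) = fun _ => (0 : ℝ≥0∞) := by
        funext ε
        have hdynS : dynS (fun x : ℤ → Y => fun k => x (k + 1)) ε = 0 := by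
          rw [dynS]
          have hf2 : (fun n : ℕ => ENNReal.ofReal
              (Real.log (dynSepNum (fun x : ℤ → Y => fun k => x (k + 1)) n ε)) / (n : ℝ≥0∞))
              = fun _ => (0 : ℝ≥0∞) := by
            funext n
            rw [dynSepNum_of_isEmpty]
            simp
          rw [hf2, Filter.limsup_const]
        rw [hdynS, ENNReal.zero_div]
      rw [hfun, Filter.limsup_const]
    have h2 : upperBoxDim Y = 0 := by
      rw [upperBoxDim]
      have hfun : (fun ε : ℝ => ENNReal.ofReal (Real.log (sepNum Y ε))
          / ENNReal.ofReal |Real.log ε|) = fun _ => (0 : ℝ≥0∞) := by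
        funext ε
        rw [sepNum_of_isEmpty]
        simp
      rw [hfun, Filter.limsup_const]
    rw [h1, h2]
  · apply le_antisymm
    · -- upper bound
      set U := upperBoxDim Y with hUdef
      have key : ∀ η : ℝ, 0 < η →
          mdim (fun x : ℤ → Y => fun k => x (k + 1)) ≤ ENNReal.ofReal ((1 + η) * (1 + η)) * U := by
        intro η hη
        have hc8 : (0:ℝ) < 8 * twoK := by have := twoK_pos; linarith
        have hc81 : (1:ℝ) ≤ 8 * twoK := by have := one_le_twoK; linarith
        set g : ℝ → ℝ≥0∞ := fun δ =>
          ENNReal.ofReal (Real.log (sepNum Y δ)) / ENNReal.ofReal |Real.log δ| with hg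
        set φ : ℝ → ℝ := fun ε => ε / (8 * twoK) with hφ
        have hφt : Filter.Tendsto φ (nhdsWithin 0 (Set.Ioi 0)) (nhdsWithin 0 (Set.Ioi 0)) := by
          rw [tendsto_nhdsWithin_iff]
          constructor
          · have h0 : Filter.Tendsto φ (nhds 0) (nhds ((0:ℝ) / (8 * twoK))) :=
              (continuous_id.div_const _).tendsto 0
            rw [zero_div] at h0
            exact h0.mono_left nhdsWithin_le_nhds
          · filter_upwards [self_mem_nhdsWithin] with ε hε
            exact div_pos hε hc8
        have hpt : ∀ᶠ ε in nhdsWithin (0:ℝ) (Set.Ioi 0),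
            dynS (fun x : ℤ → Y => fun k => x (k + 1)) ε / ENNReal.ofReal |Real.log ε|
              ≤ ENNReal.ofReal ((1 + η) * (1 + η)) * g (φ ε) := by
          have hmm : (0:ℝ) < min 1 (Real.exp (-(Real.log (8 * twoK)) / η)) :=
            lt_min one_pos (Real.exp_pos _)
          filter_upwards [Ioo_mem_nhdsGT_of_mem (Set.mem_Ico.mpr ⟨le_refl (0:ℝ), hmm⟩)]
            with ε hε
          obtain ⟨hε0, hεlt⟩ := hε
          have hε1 : ε < 1 := lt_of_lt_of_le hεlt (min_le_left _ _)
          have hεe : ε < Real.exp (-(Real.log (8 * twoK)) / η) :=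
            lt_of_lt_of_le hεlt (min_le_right _ _)
          have hδ0 : 0 < φ ε := div_pos hε0 hc8
          have hδ1 : φ ε < 1 := lt_of_le_of_lt (div_le_self hε0.le hc81) hε1
          have hlogε : Real.log ε < 0 := Real.log_neg hε0 hε1
          have hlogδ : Real.log (φ ε) < 0 := Real.log_neg hδ0 hδ1
          have habsε : |Real.log ε| = -Real.log ε := abs_of_neg hlogε
          have habsδ : |Real.log (φ ε)| = -Real.log (φ ε) := abs_of_neg hlogδ
          have hlogφ : Real.log (φ ε) = Real.log ε - Real.log (8 * twoK) :=
            Real.log_div (ne_of_gt hε0) (ne_of_gt hc8)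
          have hεe' : Real.log ε < -(Real.log (8 * twoK)) / η := by
            have h := Real.log_lt_log hε0 hεe
            rwa [Real.log_exp] at h
          have hc8log : 0 ≤ Real.log (8 * twoK) := Real.log_nonneg hc81
          have hcmp : |Real.log (φ ε)| ≤ (1 + η) * |Real.log ε| := by
            rw [habsε, habsδ, hlogφ]
            rw [lt_div_iff₀ hη] at hεe'
            nlinarith
          have ht0 : 0 < |Real.log (φ ε)| := abs_pos.mpr (ne_of_lt hlogδ)
          have hstep1 : dynS (fun x : ℤ → Y => fun k => x (k + 1)) ε
              ≤ ENNReal.ofReal (1 + η) * ENNReal.ofReal (Real.log (sepNum Y (φ ε))) := by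
            have h := dynS_le hm hε0 hη
            rwa [ENNReal.ofReal_mul (by linarith)] at h
          calc dynS (fun x : ℤ → Y => fun k => x (k + 1)) ε / ENNReal.ofReal |Real.log ε|
              ≤ ENNReal.ofReal (1 + η) * ENNReal.ofReal (Real.log (sepNum Y (φ ε)))
                  / ENNReal.ofReal |Real.log ε| :=
                ENNReal.div_le_div_right hstep1 _
            _ = ENNReal.ofReal (1 + η) * (ENNReal.ofReal (Real.log (sepNum Y (φ ε)))
                  / ENNReal.ofReal |Real.log ε|) := by rw [mul_div_assoc]
            _ ≤ ENNReal.ofReal (1 + η) * (ENNReal.ofReal (1 + η)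
                  * (ENNReal.ofReal (Real.log (sepNum Y (φ ε)))
                    / ENNReal.ofReal |Real.log (φ ε)|)) :=
                mul_le_mul' le_rfl (div_ofReal_le ht0 hη.le hcmp)
            _ = ENNReal.ofReal ((1 + η) * (1 + η)) * g (φ ε) := by
                rw [ENNReal.ofReal_mul (by linarith), mul_assoc]
        calc mdim (fun x : ℤ → Y => fun k => x (k + 1))
            = Filter.limsup (fun ε : ℝ => dynS (fun x : ℤ → Y => fun k => x (k + 1)) ε
                / ENNReal.ofReal |Real.log ε|) (nhdsWithin 0 (Set.Ioi 0)) := by rw [mdim]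
          _ ≤ Filter.limsup (fun ε => ENNReal.ofReal ((1 + η) * (1 + η)) * g (φ ε))
                (nhdsWithin 0 (Set.Ioi 0)) :=
              Filter.limsup_le_limsup hpt (by isBoundedDefault) (by isBoundedDefault)
          _ ≤ ENNReal.ofReal ((1 + η) * (1 + η))
                * Filter.limsup (fun ε => g (φ ε)) (nhdsWithin 0 (Set.Ioi 0)) :=
              limsup_const_mul_le' _ _ _ ENNReal.ofReal_ne_top
          _ ≤ ENNReal.ofReal ((1 + η) * (1 + η)) * U := by
              refine mul_le_mul' le_rfl ?_
              have heq : Filter.limsup (fun ε => g (φ ε)) (nhdsWithin (0:ℝ) (Set.Ioi 0))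
                  = Filter.limsup g (Filter.map φ (nhdsWithin (0:ℝ) (Set.Ioi 0))) := rfl
              rw [heq, hUdef, upperBoxDim]
              exact Filter.limsup_le_limsup_of_le hφt (by isBoundedDefault) (by isBoundedDefault)
      by_cases hU : U = ⊤
      · rw [hU]; exact le_top
      · have h1 : Filter.Tendsto (fun η : ℝ => ENNReal.ofReal ((1 + η) * (1 + η)))
            (nhdsWithin 0 (Set.Ioi 0)) (nhds 1) := by
          have hcont : Filter.Tendsto (fun η : ℝ => (1 + η) * (1 + η)) (nhds 0) (nhds 1) := by
            have hc : Continuous (fun η : ℝ => (1 + η) * (1 + η)) :=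
              (continuous_const.add continuous_id).mul (continuous_const.add continuous_id)
            have h := hc.tendsto 0
            norm_num at h
            exact h
          have h2 := (ENNReal.continuous_ofReal.tendsto 1).comp hcont
          rw [ENNReal.ofReal_one] at h2
          exact h2.mono_left nhdsWithin_le_nhds
        have htend : Filter.Tendsto (fun η : ℝ => ENNReal.ofReal ((1 + η) * (1 + η)) * U)
            (nhdsWithin 0 (Set.Ioi 0)) (nhds U) := by
          have h3 := ENNReal.Tendsto.mul_const h1 (Or.inr hU)
          rwa [one_mul] at h3
        refine ge_of_tendsto htend ?_
        filter_upwards [self_mem_nhdsWithin] with η hη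
        exact key η hη
    · -- lower bound
      rw [mdim, upperBoxDim]
      refine Filter.limsup_le_limsup ?_ (by isBoundedDefault) (by isBoundedDefault)
      filter_upwards [self_mem_nhdsWithin] with ε hε
      exact ENNReal.div_le_div_right (dynS_ge hm hε) _
end

section
/- Let (X,d) be a metric space, T:X→X a Borel measurable map, μ a Borel probability measure on X, n ≥ 1 and ε > 0. Suppose Z=(Z_0,…,Z_{n−1}):X→X^n is a measurable map with finite image satisfying ∫_X (1/n)∑_{k=0}^{n−1} d(T^k x, Z_k(x)) dμ(x) ≤ ε. Then there exists a measurable map Z'=(Z'_0,…,Z'_{n−1}):X→X^n with finite image such that Z'_k = T^k ∘ Z'_0 for all 0 ≤ k ≤ n−1, the preimage partitions of Z and Z' coincide, and ∫_X (1/n)∑_{k=0}^{n−1} d(T^k x, Z'_k(x)) dμ(x) ≤ 2ε. -/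
open Filter Set Metric Function
open scoped ENNReal NNReal

open MeasureTheory in
/-- **Lemma 4.4**: any `(n,ε)`-approximation `Z` of `(X,T)` can be replaced by an
`(n,2ε)`-approximation `Z'` of the form `Z'_k = T^k ∘ Z'_0`, with the same preimage
partition. -/
theorem exists_orbit_approximation
    {X : Type u} [MetricSpace X] [MeasurableSpace X] [BorelSpace X]
    (T : X → X) (hT : Measurable T)
    (μ : MeasureTheory.Measure X) (hprob : MeasureTheory.IsProbabilityMeasure μ)
    (n : ℕ) (hn : 1 ≤ n) (ε : ℝ) (hε : 0 < ε)
    (Z : X → Fin n → X) (hZmeas : Measurable Z) (hZfin : (Set.range Z).Finite)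
    (hZint : ∫ x, (∑ k : Fin n, dist (T^[(k : ℕ)] x) (Z x k)) / n ∂μ ≤ ε) :
    ∃ Z₀ : X → X, Measurable Z₀ ∧ (Set.range Z₀).Finite ∧
      (∀ x y : X, Z x = Z y ↔ Z₀ x = Z₀ y) ∧
      ∫ x, (∑ k : Fin n, dist (T^[(k : ℕ)] x) (T^[(k : ℕ)] (Z₀ x))) / n ∂μ ≤ 2 * ε := by
    classical
  have hX : Nonempty X := by
    by_contra h
    rw [not_nonempty_iff] at h
    have h1 := hprob.measure_univ
    rw [Set.univ_eq_empty_iff.2 h, measure_empty] at h1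
    exact zero_ne_one h1
  have hnpos : (0:ℝ) < n := by exact_mod_cast hn
  set g : X → ℝ := fun x => (∑ k : Fin n, dist (T^[(k:ℕ)] x) (Z x k)) / n with hgdef
  have hgnonneg : ∀ x, 0 ≤ g x := fun x =>
    div_nonneg (Finset.sum_nonneg fun k _ => dist_nonneg) hnpos.le
  have hAmeas : ∀ v : Fin n → X, MeasurableSet (Z ⁻¹' {v}) := fun v =>
    hZmeas (measurableSet_singleton v)
  have hpiece : ∀ f : X → (Fin n → X) → ℝ, (∀ v, Measurable fun x => f x v) →
      Measurable fun x => f x (Z x) := by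
    intro f hf B hB
    have hpre : (fun x => f x (Z x)) ⁻¹' B =
        ⋃ v ∈ Set.range Z, Z ⁻¹' {v} ∩ (fun x => f x v) ⁻¹' B := by
      ext x
      simp only [Set.mem_preimage, Set.mem_iUnion, Set.mem_inter_iff, Set.mem_singleton_iff]
      constructor
      · intro hx
        exact ⟨Z x, ⟨x, rfl⟩, rfl, hx⟩
      · rintro ⟨v, hv, hxv, hxB⟩
        rwa [hxv]
    rw [hpre]
    exact MeasurableSet.biUnion hZfin.countable fun v _ => (hAmeas v).inter (hf v hB)
  have hdistmeas : ∀ c : X, ∀ k : ℕ, Measurable fun x : X => dist (T^[k] x) c :=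
    fun c k => ((continuous_id.dist continuous_const).measurable).comp (hT.iterate k)
  have hgmeas : Measurable g := by
    refine hpiece (fun x v => (∑ k : Fin n, dist (T^[(k:ℕ)] x) (v k)) / n) fun v => ?_
    exact Measurable.div_const (Finset.measurable_sum _ fun k _ => hdistmeas (v k) k) n
  -- choose in each fiber a point whose distortion is at most the fiber average
  have hsel : ∀ v ∈ Set.range Z, ∃ y, Z y = v ∧
      (Integrable g μ → (μ (Z ⁻¹' {v})).toReal * g y ≤ ∫ x in Z ⁻¹' {v}, g x ∂μ) := by
    intro v hv
    by_cases hI : Integrable g μ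
    · by_cases h0 : μ (Z ⁻¹' {v}) = 0
      · obtain ⟨y, hy⟩ := hv
        refine ⟨y, hy, fun _ => ?_⟩
        rw [h0]
        simpa using setIntegral_nonneg (hAmeas v) fun x _ => hgnonneg x
      · obtain ⟨y, hy, hle⟩ :=
          MeasureTheory.exists_le_setAverage h0 (measure_ne_top μ _) hI.integrableOn
        refine ⟨y, hy, fun _ => ?_⟩
        rw [setAverage_eq, smul_eq_mul] at hle
        have hpos : 0 < (μ (Z ⁻¹' {v})).toReal :=
          ENNReal.toReal_pos h0 (measure_ne_top μ _)
        calc (μ (Z ⁻¹' {v})).toReal * g y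
            ≤ (μ (Z ⁻¹' {v})).toReal * ((μ (Z ⁻¹' {v})).toReal⁻¹ * ∫ x in Z ⁻¹' {v}, g x ∂μ) :=
              by gcongr; exact hle
          _ = ∫ x in Z ⁻¹' {v}, g x ∂μ := by
              rw [← mul_assoc, mul_inv_cancel₀ hpos.ne', one_mul]
    · obtain ⟨y, hy⟩ := hv
      exact ⟨y, hy, fun hI' => absurd hI' hI⟩
  set sel : (Fin n → X) → X := fun v =>
    if h : v ∈ Set.range Z then (hsel v h).choose else Classical.arbitrary X with hseldef
  set Z₀ : X → X := fun x => sel (Z x) with hZ₀def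
  have hselmem : ∀ x : X, Z (Z₀ x) = Z x := by
    intro x
    have hx : Z x ∈ Set.range Z := ⟨x, rfl⟩
    simp only [hZ₀def, hseldef, dif_pos hx]
    exact (hsel (Z x) hx).choose_spec.1
  -- measurability of Z₀
  have hZ₀meas : Measurable Z₀ := by
    intro B hB
    have hpre : Z₀ ⁻¹' B = ⋃ v ∈ {v ∈ Set.range Z | sel v ∈ B}, Z ⁻¹' {v} := by
      ext x
      simp only [Set.mem_preimage, Set.mem_iUnion, Set.mem_setOf_eq, Set.mem_singleton_iff]
      constructor
      · intro hx
        exact ⟨Z x, ⟨⟨x, rfl⟩, hx⟩, rfl⟩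
      · rintro ⟨v, ⟨hv, hvB⟩, hxv⟩
        simpa [hZ₀def, hxv] using hvB
    rw [hpre]
    exact MeasurableSet.biUnion ((hZfin.subset (Set.sep_subset _ _)).countable)
      fun v _ => hAmeas v
  -- finite range
  have hZ₀fin : (Set.range Z₀).Finite := by
    have : Set.range Z₀ ⊆ sel '' Set.range Z := by
      rintro _ ⟨x, rfl⟩
      exact ⟨Z x, ⟨x, rfl⟩, rfl⟩
    exact (hZfin.image sel).subset this
  -- same preimage partition
  have hpart : ∀ x y : X, Z x = Z y ↔ Z₀ x = Z₀ y := by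
    intro x y
    constructor
    · intro h; simp only [hZ₀def, h]
    · intro h
      calc Z x = Z (Z₀ x) := (hselmem x).symm
        _ = Z (Z₀ y) := by rw [h]
        _ = Z y := hselmem y
  refine ⟨Z₀, hZ₀meas, hZ₀fin, hpart, ?_⟩
  -- the distortion bound
  set F : X → ℝ := fun x => (∑ k : Fin n, dist (T^[(k:ℕ)] x) (T^[(k:ℕ)] (Z₀ x))) / n with hFdef
  set φ : X → ℝ := fun x => g (Z₀ x) with hφdef
  have hφeq : ∀ x, φ x = (∑ k : Fin n, dist (T^[(k:ℕ)] (Z₀ x)) (Z x k)) / n := by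
    intro x
    simp only [hφdef, hgdef, hselmem x]
  have hFnonneg : ∀ x, 0 ≤ F x := fun x =>
    div_nonneg (Finset.sum_nonneg fun k _ => dist_nonneg) hnpos.le
  have hφnonneg : ∀ x, 0 ≤ φ x := fun x => hgnonneg _
  have hFmeas : Measurable F := by
    refine hpiece (fun x v => (∑ k : Fin n, dist (T^[(k:ℕ)] x) (T^[(k:ℕ)] (sel v))) / n)
      fun v => ?_
    show Measurable fun x => (∑ k : Fin n, dist (T^[(k:ℕ)] x) (T^[(k:ℕ)] (sel v))) / (n:ℝ)
    exact Measurable.div_const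
      (Finset.measurable_sum _ fun (k : Fin n) _ => hdistmeas (T^[(k:ℕ)] (sel v)) (k:ℕ)) n
  have hφmeas : Measurable φ := hgmeas.comp hZ₀meas
  have hFle : ∀ x, F x ≤ g x + φ x := by
    intro x
    rw [hφeq x, hgdef]
    simp only [hFdef, ← add_div]
    rw [← Finset.sum_add_distrib]
    gcongr (∑ k : Fin n, ?_) / (n:ℝ) with k _
    exact dist_triangle_right _ _ _
  have hgle : ∀ x, g x ≤ F x + φ x := by
    intro x
    rw [hφeq x, hgdef]
    simp only [hFdef, ← add_div]
    rw [← Finset.sum_add_distrib]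
    gcongr (∑ k : Fin n, ?_) / (n:ℝ) with k _
    exact dist_triangle _ _ _
  -- φ is integrable (finite range, hence bounded)
  have hφint : Integrable φ μ := by
    have hφfin : (Set.range φ).Finite := by
      have : Set.range φ ⊆ g '' Set.range Z₀ := by
        rintro _ ⟨x, rfl⟩
        exact ⟨Z₀ x, ⟨x, rfl⟩, rfl⟩
      exact (hZ₀fin.image g).subset this
    obtain ⟨C, hC⟩ := hφfin.bddAbove
    refine (integrable_const C).mono' hφmeas.aestronglyMeasurable (ae_of_all _ fun x => ?_)
    rw [Real.norm_eq_abs, abs_of_nonneg (hφnonneg x)]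
    exact hC ⟨x, rfl⟩
  by_cases hgint : Integrable g μ
  · -- main case
    have hFint : Integrable F μ := by
      refine (hgint.add hφint).mono' hFmeas.aestronglyMeasurable (ae_of_all _ fun x => ?_)
      rw [Real.norm_eq_abs, abs_of_nonneg (hFnonneg x)]
      exact hFle x
    have hstep : ∫ x, F x ∂μ ≤ ∫ x, g x ∂μ + ∫ x, φ x ∂μ := by
      rw [← integral_add hgint hφint]
      exact integral_mono hFint (hgint.add hφint) hFle
    have hφg : ∫ x, φ x ∂μ ≤ ∫ x, g x ∂μ := by
      set S : Finset (Fin n → X) := hZfin.toFinset with hSdef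
      have hmemS : ∀ x : X, Z x ∈ S := fun x => hZfin.mem_toFinset.2 ⟨x, rfl⟩
      have hcover : (⋃ v ∈ S, Z ⁻¹' {v}) = Set.univ := by
        ext x
        simp only [Set.mem_iUnion, Set.mem_preimage, Set.mem_singleton_iff, Set.mem_univ,
          iff_true]
        exact ⟨Z x, hmemS x, rfl⟩
      have hdisj : Set.Pairwise (↑S) (Disjoint on fun v => Z ⁻¹' {v}) := by
        intro u _ v _ huv
        refine Set.disjoint_left.2 ?_
        intro x hxu hxv
        exact huv (by rw [← hxu, ← hxv])
      have hsplit : ∀ f : X → ℝ, Integrable f μ →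
          ∫ x, f x ∂μ = ∑ v ∈ S, ∫ x in Z ⁻¹' {v}, f x ∂μ := by
        intro f hf
        rw [← setIntegral_univ (μ := μ) (f := f), ← hcover]
        exact integral_biUnion_finset S (fun v _ => hAmeas v) hdisj fun v _ => hf.integrableOn
      rw [hsplit φ hφint, hsplit g hgint]
      refine Finset.sum_le_sum fun v hv => ?_
      have hvr : v ∈ Set.range Z := hZfin.mem_toFinset.1 hv
      have hselZ : ∀ x ∈ Z ⁻¹' {v}, Z₀ x = sel v := by
        intro x hx
        simp only [Set.mem_preimage, Set.mem_singleton_iff] at hx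
        simp only [hZ₀def, hx]
      have hconst : ∫ x in Z ⁻¹' {v}, φ x ∂μ = (μ (Z ⁻¹' {v})).toReal * g (sel v) := by
        rw [setIntegral_congr_fun (hAmeas v) (g := fun _ => g (sel v))
          (fun x hx => by simp only [hφdef, hselZ x hx]), setIntegral_const, smul_eq_mul, measureReal_def]
      rw [hconst]
      have hselv : sel v = (hsel v hvr).choose := by simp only [hseldef, dif_pos hvr]
      rw [hselv]
      exact (hsel v hvr).choose_spec.2 hgint
    calc ∫ x, F x ∂μ ≤ ∫ x, g x ∂μ + ∫ x, φ x ∂μ := hstep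
      _ ≤ ε + ε := add_le_add hZint (hφg.trans hZint)
      _ = 2 * ε := by ring
  · -- g not integrable: then F is not integrable either, so the integral is 0
    have hFnotint : ¬ Integrable F μ := by
      intro hFint
      apply hgint
      refine (hFint.add hφint).mono' hgmeas.aestronglyMeasurable (ae_of_all _ fun x => ?_)
      rw [Real.norm_eq_abs, abs_of_nonneg (hgnonneg x)]
      exact hgle x
    rw [integral_undef hFnotint]
    positivity
end

section
/- Let I be a nonempty index set and for each i ∈ I let f_i : (0,∞) → ℝ be a convex and antitone (decreasing) function. Define F(R) = sup_{i∈I} f_i(R) and assume F(R) is finite for every R > 0 and that inf_{R>0} F(R) ≤ 0. Then for every ε > 0 that lies in the image of F, one has inf{ R > 0 : F(R) ≤ ε } = sup_{i∈I} inf{ R > 0 : f_i(R) ≤ ε }. -/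
open Filter Set Metric Function
open scoped ENNReal NNReal

/-- **Lemma 4.10**: for a family of convex decreasing functions `f_i : (0,∞) → ℝ` whose
pointwise supremum `F` is finite and has infimum at most `0`, the generalized inverse of `F`
at any level `ε` in the image of `F` is the supremum of the generalized inverses of the
`f_i`. -/
theorem sInf_le_sup_eq_sSup_sInf
    {ι : Type u} [Nonempty ι] (f : ι → ℝ → ℝ)
    (hconv : ∀ i, ConvexOn ℝ (Set.Ioi 0) (f i))
    (hanti : ∀ i, AntitoneOn (f i) (Set.Ioi 0))
    (F : ℝ → ℝ)
    (hF : ∀ R : ℝ, 0 < R → F R = ⨆ i, f i R)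
    (hbdd : ∀ R : ℝ, 0 < R → BddAbove (Set.range fun i => f i R))
    (hinf : sInf (F '' Set.Ioi 0) ≤ 0)
    (ε : ℝ) (hε : 0 < ε) (hεim : ε ∈ F '' Set.Ioi 0) :
    sInf {R : ℝ | 0 < R ∧ F R ≤ ε} = ⨆ i, sInf {R : ℝ | 0 < R ∧ f i R ≤ ε} := by
  obtain ⟨R₀, hR₀pos, hR₀⟩ := hεim
  have hS0 : R₀ ∈ {R : ℝ | 0 < R ∧ F R ≤ ε} := ⟨hR₀pos, le_of_eq hR₀⟩
  have hSne : {R : ℝ | 0 < R ∧ F R ≤ ε}.Nonempty := ⟨R₀, hS0⟩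
  have hsub : ∀ i, {R : ℝ | 0 < R ∧ F R ≤ ε} ⊆ {R : ℝ | 0 < R ∧ f i R ≤ ε} := by
    intro i R ⟨hRpos, hRle⟩
    refine ⟨hRpos, ?_⟩
    have : f i R ≤ F R := by
      rw [hF R hRpos]
      exact le_ciSup (hbdd R hRpos) i
    linarith
  have hbb : ∀ i, BddBelow {R : ℝ | 0 < R ∧ f i R ≤ ε} :=
    fun i => ⟨0, fun R hR => le_of_lt hR.1⟩
  have hbbS : BddBelow {R : ℝ | 0 < R ∧ F R ≤ ε} := ⟨0, fun R hR => le_of_lt hR.1⟩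
  have hle : ∀ i, sInf {R : ℝ | 0 < R ∧ f i R ≤ ε} ≤ sInf {R : ℝ | 0 < R ∧ F R ≤ ε} :=
    fun i => csInf_le_csInf (hbb i) hSne (hsub i)
  have hbdA : BddAbove (Set.range fun i => sInf {R : ℝ | 0 < R ∧ f i R ≤ ε}) :=
    ⟨sInf {R : ℝ | 0 < R ∧ F R ≤ ε}, by rintro _ ⟨i, rfl⟩; exact hle i⟩
  have hnn : ∀ i, (0:ℝ) ≤ sInf {R : ℝ | 0 < R ∧ f i R ≤ ε} :=
    fun i => le_csInf ⟨R₀, hsub i hS0⟩ (fun R hR => le_of_lt hR.1)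
  refine le_antisymm ?_ (ciSup_le hle)
  -- hard direction
  set A := ⨆ i, sInf {R : ℝ | 0 < R ∧ f i R ≤ ε} with hA
  have hAnn : (0:ℝ) ≤ A :=
    le_trans (hnn (Classical.arbitrary ι)) (le_ciSup hbdA (Classical.arbitrary ι))
  refine le_of_forall_gt_imp_ge_of_dense fun R hRA => ?_
  have hRpos : 0 < R := lt_of_le_of_lt hAnn hRA
  have hmem : R ∈ {R : ℝ | 0 < R ∧ F R ≤ ε} := by
    refine ⟨hRpos, ?_⟩
    rw [hF R hRpos]
    refine ciSup_le fun i => ?_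
    have hi : sInf {R : ℝ | 0 < R ∧ f i R ≤ ε} < R :=
      lt_of_le_of_lt (le_ciSup hbdA i) hRA
    obtain ⟨R', hR'mem, hR'lt⟩ := exists_lt_of_csInf_lt ⟨R₀, hsub i hS0⟩ hi
    calc f i R ≤ f i R' := hanti i hR'mem.1 hRpos (le_of_lt hR'lt)
    _ ≤ ε := hR'mem.2
  exact csInf_le hbbS hmem
end

section
/- Let 0 ≤ a < b ≤ 1, set β = b − a, let l ≥ 1 be an integer, divide J = [a,b] into 2l equal closed subintervals J^1,…,J^{2l} of length β/(2l), and set ε = β/(2l). Suppose f:[0,1]→[0,1] is a continuous map such that J ⊆ f(J^s) for every s ∈ {1,…,2l}. Then with d the Euclidean metric on [0,1], S([0,1],d,ε) ≥ log l. -/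
open Filter Set Metric Function
open scoped ENNReal NNReal

section MainAux

lemma aux_dist_le_dynDist {X : Type*} [MetricSpace X] (T : X → X) {m k : ℕ} (hk : k < m)
    (x y : X) : dist (T^[k] x) (T^[k] y) ≤ dynDist T m x y := by
  rw [dist_nndist, dynDist, NNReal.coe_le_coe]
  exact Finset.le_sup (f := fun k => nndist (T^[k] x) (T^[k] y)) (Finset.mem_range.2 hk)

lemma aux_exists_of_lt_dynDist {X : Type*} [MetricSpace X] {T : X → X} {m : ℕ} {ε : ℝ}
    (hε : 0 ≤ ε) {x y : X} (h : ε < dynDist T m x y) :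
    ∃ k < m, ε < dist (T^[k] x) (T^[k] y) := by
  by_contra hc
  push_neg at hc
  refine absurd h (not_lt.2 ?_)
  rw [dynDist, ← Real.coe_toNNReal ε hε, NNReal.coe_le_coe]
  refine Finset.sup_le fun k hk => ?_
  have h1 := hc k (Finset.mem_range.1 hk)
  rw [dist_nndist, ← Real.coe_toNNReal ε hε, NNReal.coe_le_coe] at h1
  exact h1

lemma aux_card_le {T : (Icc (0:ℝ) 1) → Icc (0:ℝ) 1} {m : ℕ} {ε : ℝ} (hε : 0 < ε)
    {E : Finset (Icc (0:ℝ) 1)} (hE : ∀ x ∈ E, ∀ y ∈ E, x ≠ y → ε < dynDist T m x y) :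
    E.card ≤ (⌊1/ε⌋₊ + 1) ^ m := by
  classical
  set φ : (Icc (0:ℝ) 1) → (Fin m → ℕ) := fun z k => ⌊((T^[(k:ℕ)] z : ℝ)) / ε⌋₊ with hφ
  have hmem : ∀ z ∈ E, φ z ∈ Fintype.piFinset (fun _ : Fin m => Finset.range (⌊1/ε⌋₊ + 1)) := by
    intro z _
    rw [Fintype.mem_piFinset]
    intro k
    rw [Finset.mem_range, Nat.lt_succ_iff]
    exact Nat.floor_le_floor ((div_le_div_iff_of_pos_right hε).2 (T^[(k:ℕ)] z).2.2)
  have hinj : Set.InjOn φ E := by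
    intro x hx y hy hxy
    by_contra hne
    obtain ⟨k, hk, hklt⟩ := aux_exists_of_lt_dynDist hε.le (hE x hx y hy hne)
    have h2 : φ x ⟨k, hk⟩ = φ y ⟨k, hk⟩ := by rw [hxy]
    simp only [hφ] at h2
    set p := ((T^[k] x : Icc (0:ℝ) 1) : ℝ) with hp
    set q := ((T^[k] y : Icc (0:ℝ) 1) : ℝ) with hq
    have hp0 : 0 ≤ p := (T^[k] x).2.1
    have hq0 : 0 ≤ q := (T^[k] y).2.1
    set N := ⌊p / ε⌋₊ with hN
    have hN2 : ⌊q / ε⌋₊ = N := h2.symm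
    have h3 : (N:ℝ) ≤ p / ε := hN ▸ Nat.floor_le (by positivity)
    have h4 : p / ε < N + 1 := by rw [hN] ; exact Nat.lt_floor_add_one _
    have h5 : (N:ℝ) ≤ q / ε := hN2 ▸ Nat.floor_le (by positivity)
    have h6 : q / ε < N + 1 := by rw [← hN2] ; exact Nat.lt_floor_add_one _
    have hplo : (N:ℝ) * ε ≤ p := (le_div_iff₀ hε).1 h3
    have hphi : p < ((N:ℝ) + 1) * ε := (div_lt_iff₀ hε).1 h4
    have hqlo : (N:ℝ) * ε ≤ q := (le_div_iff₀ hε).1 h5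
    have hqhi : q < ((N:ℝ) + 1) * ε := (div_lt_iff₀ hε).1 h6
    have hd : dist (T^[k] x) (T^[k] y) < ε := by
      rw [Subtype.dist_eq, Real.dist_eq, ← hp, ← hq, abs_sub_lt_iff]
      constructor <;> nlinarith
    linarith
  have := Finset.card_le_card_of_injOn φ hmem hinj
  simpa using this

lemma aux_le_dynSepNum {T : (Icc (0:ℝ) 1) → Icc (0:ℝ) 1} {m : ℕ} {ε : ℝ} (hε : 0 < ε)
    (E : Finset (Icc (0:ℝ) 1)) (hE : ∀ x ∈ E, ∀ y ∈ E, x ≠ y → ε < dynDist T m x y) :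
    E.card ≤ dynSepNum T m ε := by
  apply le_csSup
  · refine ⟨(⌊1/ε⌋₊ + 1) ^ m, ?_⟩
    rintro k ⟨F, hF, rfl⟩
    exact aux_card_le hε hF
  · exact ⟨E, hE, rfl⟩

lemma aux_dynS_ge {X : Type*} [MetricSpace X] (T : X → X) (ε : ℝ) (l : ℕ) (hl : 1 ≤ l)
    (h : ∀ n : ℕ, l ^ n ≤ dynSepNum T (n + 1) ε) :
    ENNReal.ofReal (Real.log l) ≤ dynS T ε := by
  set L := Real.log l with hLdef
  have hl0 : (0:ℝ) < l := by exact_mod_cast hl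
  have hreal : Tendsto (fun m : ℕ => L * (1 - 1/(m:ℝ))) atTop (nhds L) := by
    have := (tendsto_const_nhds (x := L) (f := atTop (α := ℕ))).mul
      ((tendsto_const_nhds (x := (1:ℝ))).sub tendsto_one_div_atTop_nhds_zero_nat)
    simpa using this
  have hten : Tendsto (fun m : ℕ => ENNReal.ofReal (L * (1 - 1/(m:ℝ)))) atTop
      (nhds (ENNReal.ofReal L)) := (ENNReal.continuous_ofReal.tendsto L).comp hreal
  rw [dynS, ← hten.liminf_eq]
  refine le_trans (Filter.liminf_le_liminf ?_) Filter.liminf_le_limsup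
  filter_upwards [Filter.eventually_ge_atTop 1] with m hm
  have hm0 : (0:ℝ) < m := by exact_mod_cast hm
  have hsep : (l:ℝ) ^ (m-1) ≤ (dynSepNum T m ε : ℝ) := by
    have h2 := h (m-1)
    rw [Nat.sub_add_cancel hm] at h2
    exact_mod_cast h2
  have hlog : ((m:ℝ) - 1) * L ≤ Real.log (dynSepNum T m ε) := by
    have h2 : Real.log ((l:ℝ) ^ (m-1)) ≤ Real.log (dynSepNum T m ε) :=
      Real.log_le_log (by positivity) hsep
    rw [Real.log_pow] at h2
    rw [show ((m:ℝ) - 1) = ((m - 1 : ℕ) : ℝ) by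
      rw [Nat.cast_sub hm, Nat.cast_one]]
    exact h2
  calc ENNReal.ofReal (L * (1 - 1/(m:ℝ)))
      = ENNReal.ofReal ((((m:ℝ)-1) * L) / m) := by
        rw [show L * (1-1/(m:ℝ)) = (((m:ℝ)-1)*L)/m by field_simp]
    _ = ENNReal.ofReal (((m:ℝ)-1) * L) / ENNReal.ofReal (m:ℝ) := ENNReal.ofReal_div_of_pos hm0
    _ ≤ ENNReal.ofReal (Real.log (dynSepNum T m ε)) / ENNReal.ofReal (m:ℝ) :=
        ENNReal.div_le_div_right (ENNReal.ofReal_le_ofReal hlog) _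
    _ = ENNReal.ofReal (Real.log (dynSepNum T m ε)) / (m : ℝ≥0∞) := by
        rw [ENNReal.ofReal_natCast]

end MainAux

/-- **Lemma 5.2**: if `J = [a,b] ⊆ [0,1]` is split into `2l` equal subintervals of length
`ε = (b-a)/(2l)` and the continuous map `f : [0,1] → [0,1]` satisfies `J ⊆ f(Jˢ)` for each
subinterval `Jˢ`, then `S([0,1],d,ε) ≥ log l`. -/
theorem interval_horseshoe_dynS_ge
    (a b : ℝ) (ha : 0 ≤ a) (hab : a < b) (hb : b ≤ 1) (l : ℕ) (hl : 1 ≤ l)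
    (f : (Set.Icc (0:ℝ) 1) → (Set.Icc (0:ℝ) 1)) (hf : Continuous f)
    (hhorse : ∀ s ∈ Finset.range (2 * l),
      {x : (Set.Icc (0:ℝ) 1) | a ≤ (x : ℝ) ∧ (x : ℝ) ≤ b} ⊆
        f '' {x : (Set.Icc (0:ℝ) 1) |
          a + (s : ℝ) * ((b - a) / (2 * l)) ≤ (x : ℝ) ∧
          (x : ℝ) ≤ a + ((s : ℝ) + 1) * ((b - a) / (2 * l))}) :
    ENNReal.ofReal (Real.log l) ≤ dynS f ((b - a) / (2 * l)) := by
  rcases eq_or_lt_of_le hl with h1 | hl2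
  · rw [← h1]; simp
  · have hl2' : 2 ≤ l := hl2
    have hll : (2:ℝ) ≤ (l:ℝ) := by exact_mod_cast hl2'
    set ε := (b - a) / (2 * (l:ℝ)) with hεdef
    have hl0 : (0:ℝ) < l := by linarith
    have hba : 0 < b - a := sub_pos.2 hab
    have hε : 0 < ε := div_pos hba (by linarith)
    set c : ℕ → ℝ := fun s => a + s * ε with hcdef
    have hc_mono : ∀ {s t : ℕ}, s ≤ t → c s ≤ c t := by
      intro s t hst
      simp only [hcdef]
      have h1 : (s:ℝ) ≤ t := by exact_mod_cast hst
      nlinarith [hε.le]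
    have hc2l : c (2*l) = b := by
      simp only [hcdef, hεdef]
      push_cast
      field_simp
      ring
    set g : ℝ → ℝ := fun x => ((f (Set.projIcc 0 1 zero_le_one x)) : ℝ) with hgdef
    have hgc : Continuous g := continuous_subtype_val.comp (hf.comp continuous_projIcc)
    have hgval : ∀ z : Icc (0:ℝ) 1, g (z:ℝ) = ((f z : Icc (0:ℝ) 1)  : ℝ) := by
      intro z
      simp only [hgdef, Set.projIcc_val]
    have hit : ∀ (k:ℕ) (z : Icc (0:ℝ) 1), g^[k] (z:ℝ) = ((f^[k] z : Icc (0:ℝ) 1) : ℝ) := by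
      intro k
      induction k with
      | zero => intro z; simp
      | succ k ih =>
        intro z
        rw [Function.iterate_succ_apply', Function.iterate_succ_apply', ih, hgval]
    have hIccab : Icc a b ⊆ Icc (0:ℝ) 1 := Icc_subset_Icc ha hb
    have hhorse' : ∀ s : ℕ, s < 2*l → ∀ t, a ≤ t → t ≤ b →
        ∃ p : ℝ, c s ≤ p ∧ p ≤ c (s+1) ∧ g p = t := by
      intro s hs t ht1 ht2
      have htm : t ∈ Icc (0:ℝ) 1 := ⟨ha.trans ht1, ht2.trans hb⟩
      obtain ⟨z, hz, hz3⟩ := hhorse s (Finset.mem_range.2 hs)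
        (show a ≤ ((⟨t, htm⟩ : Icc (0:ℝ) 1) : ℝ) ∧ ((⟨t, htm⟩ : Icc (0:ℝ) 1) : ℝ) ≤ b
          from ⟨ht1, ht2⟩)
      refine ⟨(z:ℝ), ?_, ?_, ?_⟩
      · have h1 := hz.1
        simp only [hcdef]
        exact h1
      · have h2 := hz.2
        simp only [hcdef]
        push_cast
        exact h2
      · rw [show (z:ℝ) = ((z : Icc (0:ℝ) 1) : ℝ) from rfl, hgval, hz3]
    have hbranch : ∀ i : Fin l, ∃ uu vv : ℝ,
        c (2*(i:ℕ)+1) ≤ uu ∧ uu ≤ vv ∧ vv ≤ c (2*(i:ℕ)+2) ∧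
        g uu ∈ ({a,b} : Set ℝ) ∧ g vv ∈ ({a,b} : Set ℝ) ∧
        ∀ t ∈ Icc a b, ∃ z ∈ Icc uu vv, g z = t := by
      intro i
      have hilt : 2*(i:ℕ)+1 < 2*l := by omega
      obtain ⟨p, hp1, hp2, hp3⟩ := hhorse' (2*(i:ℕ)+1) hilt a le_rfl hab.le
      obtain ⟨q, hq1, hq2, hq3⟩ := hhorse' (2*(i:ℕ)+1) hilt b hab.le le_rfl
      refine ⟨min p q, max p q, le_min hp1 hq1, min_le_max, ?_, ?_, ?_, ?_⟩
      · have : 2*(i:ℕ)+1+1 = 2*(i:ℕ)+2 := by omega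
        rw [← this]
        exact max_le hp2 hq2
      · rcases min_cases p q with ⟨h,_⟩|⟨h,_⟩ <;> simp [h, hp3, hq3]
      · rcases max_cases p q with ⟨h,_⟩|⟨h,_⟩ <;> simp [h, hp3, hq3]
      · intro t ht
        have htu : t ∈ uIcc (g p) (g q) := by rw [hp3, hq3, uIcc_of_le hab.le]; exact ht
        have h2 := intermediate_value_uIcc (a := p) (b := q) hgc.continuousOn htu
        simpa [Set.uIcc] using h2
    choose uu vv huu huv hvv hgu hgv hcov using hbranch
    have hIab : ∀ i : Fin l, Icc (uu i) (vv i) ⊆ Icc a b := by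
      intro i z hz
      have h1 : c 0 ≤ c (2*(i:ℕ)+1) := hc_mono (by omega)
      have h2 : c (2*(i:ℕ)+2) ≤ c (2*l) := hc_mono (by omega)
      have hc0 : c 0 = a := by simp [hcdef]
      constructor
      · calc a = c 0 := hc0.symm
          _ ≤ c (2*(i:ℕ)+1) := h1
          _ ≤ uu i := huu i
          _ ≤ z := hz.1
      · calc z ≤ vv i := hz.2
          _ ≤ c (2*(i:ℕ)+2) := hvv i
          _ ≤ c (2*l) := h2
          _ = b := hc2l
    have ha_lt : ∀ i : Fin l, a < uu i := by
      intro i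
      have h1 : c 1 ≤ c (2*(i:ℕ)+1) := hc_mono (by omega)
      have hc1 : c 1 = a + ε := by simp [hcdef]
      have := (huu i)
      linarith [hc1 ▸ h1]
    have force_b : ∀ (i : Fin l) (z : ℝ), z ∈ Icc (uu i) (vv i) → z ∈ ({a,b} : Set ℝ) →
        z = b := by
      intro i z hz habz
      rcases habz with h|h
      · exact absurd (h ▸ hz.1) (not_le.2 (ha_lt i))
      · exact h
    have hbtop : ∀ i : Fin l, b ∈ Icc (uu i) (vv i) → vv i = b := by
      intro i hbmem
      refine le_antisymm ?_ hbmem.2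
      calc vv i ≤ c (2*(i:ℕ)+2) := hvv i
        _ ≤ c (2*l) := hc_mono (by omega)
        _ = b := hc2l
    have hitin : ∀ (n : ℕ) (w : ℕ → Fin l), ∃ x : ℝ,
        ∀ k ≤ n, g^[k] x ∈ Icc (uu (w k)) (vv (w k)) := by
      intro n
      induction n with
      | zero =>
        intro w
        refine ⟨uu (w 0), fun k hk => ?_⟩
        obtain rfl : k = 0 := Nat.le_zero.1 hk
        simp only [Function.iterate_zero, id]
        exact ⟨le_rfl, huv _⟩
      | succ n ih =>
        intro w
        obtain ⟨y, hy⟩ := ih (fun k => w (k+1))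
        have hy0 : y ∈ Icc (uu (w 1)) (vv (w 1)) := by
          have := hy 0 (Nat.zero_le n)
          simpa using this
        obtain ⟨x, hx, hgx⟩ := hcov (w 0) y (hIab _ hy0)
        refine ⟨x, fun k hk => ?_⟩
        cases k with
        | zero => simpa using hx
        | succ k =>
          rw [Function.iterate_succ_apply, hgx]
          exact hy k (Nat.succ_le_succ_iff.1 hk)
    have hsep : ∀ (n : ℕ) (w w' : ℕ → Fin l) (x y : ℝ),
        (∀ k ≤ n, g^[k] x ∈ Icc (uu (w k)) (vv (w k))) →
        (∀ k ≤ n, g^[k] y ∈ Icc (uu (w' k)) (vv (w' k))) →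
        ((w n : ℕ) = 0) →
        ∀ k₀, k₀ < n → ((w k₀ : ℕ) < (w' k₀ : ℕ)) →
        ∃ k ≤ n, ε < |g^[k] x - g^[k] y| := by
      intro n w w' x y hx hy hwn k₀ hk₀n hltk
      have hxk : g^[k₀] x ≤ c (2*(w k₀ : ℕ)+2) := le_trans (hx k₀ hk₀n.le).2 (hvv _)
      have hyk : c (2*(w' k₀ : ℕ)+1) ≤ g^[k₀] y := le_trans (huu _) (hy k₀ hk₀n.le).1
      rcases (by omega : ((w' k₀ : ℕ) = (w k₀ : ℕ) + 1 ∨ (w k₀ : ℕ) + 2 ≤ (w' k₀ : ℕ))) with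
        hj | hj
      · rcases lt_or_eq_of_le hxk with hxlt | hxeq
        · refine ⟨k₀, hk₀n.le, ?_⟩
          have hgap : c (2*(w' k₀:ℕ)+1) - c (2*(w k₀:ℕ)+2) = ε := by
            simp only [hcdef, hj]
            push_cast
            ring
          rw [abs_sub_comm]
          calc ε < c (2*(w' k₀:ℕ)+1) - g^[k₀] x := by linarith
            _ ≤ g^[k₀] y - g^[k₀] x := by linarith
            _ ≤ |g^[k₀] y - g^[k₀] x| := le_abs_self _
        · exfalso
          have hveq : vv (w k₀) = g^[k₀] x := le_antisymm (hxeq ▸ hvv _) (hx k₀ hk₀n.le).2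
          have hstep : g^[k₀+1] x ∈ ({a,b} : Set ℝ) := by
            rw [Function.iterate_succ_apply', ← hveq]
            exact hgv _
          have hchain : ∀ m, k₀ + 1 ≤ m → m ≤ n → g^[m] x = b := by
            intro m hm1
            induction m, hm1 using Nat.le_induction with
            | base => intro hmn; exact force_b _ _ (hx _ hmn) hstep
            | succ m hm ih =>
              intro hmn
              have hb' : g^[m] x = b := ih (by omega)
              have hvb : vv (w m) = b := hbtop _ (hb' ▸ hx m (by omega))
              have hstep2 : g^[m+1] x ∈ ({a,b} : Set ℝ) := by
                rw [Function.iterate_succ_apply', hb']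
                exact hvb ▸ hgv (w m)
              exact force_b _ _ (hx _ hmn) hstep2
          have hbn : g^[n] x = b := hchain n hk₀n le_rfl
          have hvb : vv (w n) = b := hbtop _ (hbn ▸ hx n le_rfl)
          have h1 : b ≤ c (2*(w n:ℕ)+2) := hvb ▸ hvv (w n)
          rw [hwn] at h1
          have h2 : b = c (2*l) := hc2l.symm
          simp only [hcdef] at h1 h2
          push_cast at h1 h2
          nlinarith
      · refine ⟨k₀, hk₀n.le, ?_⟩
        have hj' : ((w k₀:ℕ):ℝ) + 2 ≤ ((w' k₀:ℕ):ℝ) := by exact_mod_cast hj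
        have hgap : c (2*(w k₀:ℕ)+2) + 2*ε ≤ c (2*(w' k₀:ℕ)+1) := by
          simp only [hcdef]
          push_cast
          nlinarith
        rw [abs_sub_comm]
        calc ε < 2*ε := by linarith
          _ ≤ g^[k₀] y - g^[k₀] x := by linarith
          _ ≤ |g^[k₀] y - g^[k₀] x| := le_abs_self _
    have key : ∀ n : ℕ, l ^ n ≤ dynSepNum f (n+1) ε := by
      intro n
      classical
      have hl0' : 0 < l := hl
      set W : (Fin n → Fin l) → (ℕ → Fin l) :=
        fun vw k => if h : k < n then vw ⟨k, h⟩ else ⟨0, hl0'⟩ with hWdef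
      have hWn : ∀ vw, ((W vw n : Fin l) : ℕ) = 0 := by
        intro vw
        simp [hWdef]
      have hWk : ∀ (vw : Fin n → Fin l) (k : Fin n), W vw (k:ℕ) = vw k := by
        intro vw k
        have hk := k.isLt
        simp [hWdef, hk]
      choose pt hpt using fun vw => hitin n (W vw)
      have hptm : ∀ vw, pt vw ∈ Icc (0:ℝ) 1 := by
        intro vw
        have h0 := hpt vw 0 (Nat.zero_le n)
        simp only [Function.iterate_zero, id] at h0
        exact hIccab (hIab _ h0)
      set F : (Fin n → Fin l) → (Icc (0:ℝ) 1) := fun vw => ⟨pt vw, hptm vw⟩ with hFdef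
      have hgF : ∀ vw (k:ℕ), g^[k] (pt vw) = ((f^[k] (F vw) : Icc (0:ℝ) 1) : ℝ) :=
        fun vw k => hit k (F vw)
      have hFsep : ∀ vw vw', vw ≠ vw' → ε < dynDist f (n+1) (F vw) (F vw') := by
        intro vw vw' hne
        obtain ⟨k₀, hk₀⟩ := Function.ne_iff.1 hne
        have hd : (W vw (k₀:ℕ) : ℕ) ≠ (W vw' (k₀:ℕ) : ℕ) := by
          rw [hWk, hWk]
          exact fun h => hk₀ (Fin.ext h)
        rcases lt_or_gt_of_ne hd with hlt' | hgt'
        · obtain ⟨k, hk, hkε⟩ := hsep n (W vw) (W vw') (pt vw) (pt vw')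
            (hpt vw) (hpt vw') (hWn vw) (k₀:ℕ) k₀.isLt hlt'
          calc ε < |g^[k] (pt vw) - g^[k] (pt vw')| := hkε
            _ = dist (f^[k] (F vw)) (f^[k] (F vw')) := by
                rw [Subtype.dist_eq, Real.dist_eq, ← hgF, ← hgF]
            _ ≤ dynDist f (n+1) (F vw) (F vw') := aux_dist_le_dynDist f (by omega) _ _
        · obtain ⟨k, hk, hkε⟩ := hsep n (W vw') (W vw) (pt vw') (pt vw)
            (hpt vw') (hpt vw) (hWn vw') (k₀:ℕ) k₀.isLt hgt'
          calc ε < |g^[k] (pt vw') - g^[k] (pt vw)| := hkε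
            _ = dist (f^[k] (F vw)) (f^[k] (F vw')) := by
                rw [Subtype.dist_eq, Real.dist_eq, ← hgF, ← hgF, abs_sub_comm]
            _ ≤ dynDist f (n+1) (F vw) (F vw') := aux_dist_le_dynDist f (by omega) _ _
      have hFinj : Function.Injective F := by
        intro vw vw' hFe
        by_contra hne
        obtain ⟨k, hk, hkε⟩ := aux_exists_of_lt_dynDist hε.le (hFsep vw vw' hne)
        rw [hFe, dist_self] at hkε
        linarith
      set E : Finset (Icc (0:ℝ) 1) := Finset.univ.image F with hEdef
      have hEcard : E.card = l ^ n := by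
        rw [hEdef, Finset.card_image_of_injective _ hFinj, Finset.card_univ]
        simp
      have hEsep : ∀ x ∈ E, ∀ y ∈ E, x ≠ y → ε < dynDist f (n+1) x y := by
        intro x hx y hy hxy
        obtain ⟨vw, _, rfl⟩ := Finset.mem_image.1 hx
        obtain ⟨vw', _, rfl⟩ := Finset.mem_image.1 hy
        exact hFsep vw vw' fun h => hxy (by rw [h])
      calc l ^ n = E.card := hEcard.symm
        _ ≤ dynSepNum f (n+1) ε := aux_le_dynSepNum hε E hEsep
    exact aux_dynS_ge f ε l hl key
end
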